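/- arXiv:1403.5605 — 3 statements merged into one kernel-verified Lean document; each statement's English description precedes it below -/
import Mathlib

section
/- In every execution of the Generalized Lamport's Bakery (GLB) algorithm, if process P_i doorway-precedes process P_j and the two processes request different sessions, then P_j does not enter the critical section before P_i enters the critical section (the FCFS property holds). -/
/-! ## Model of the Generalized Lamport's Bakery (GLB) algorithm -/

/-- Program counter of a process in the GLB algorithm.  The doorway is
`setChoosing s` (Choosing[i]:=true), `setSession s` (Session[i]:=s),
`scan s j m` (computing the max of the other token numbers, `j` is the next index
to inspect and `m` the running maximum), `setToken s m` (Token[i]:=m+1) and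
`unsetChoosing s` (Choosing[i]:=false).  The waiting room consists of the two
busy-wait checks `wait1 s j` and `wait2 s j`, and the exit section of
`exit1` (Token[i]:=0) and `exit2` (Session[i]:=0). -/
inductive GLBPc : Type
  | remainder
  | setChoosing (s : ℕ)
  | setSession (s : ℕ)
  | scan (s : ℕ) (j : ℕ) (m : ℕ)
  | setToken (s : ℕ) (m : ℕ)
  | unsetChoosing (s : ℕ)
  | wait1 (s : ℕ) (j : ℕ)
  | wait2 (s : ℕ) (j : ℕ)
  | cs (s : ℕ)
  | exit1
  | exit2
  deriving DecidableEq

/-- Global state: the shared arrays together with each process's control state. -/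
structure GLBState (N : ℕ) where
  session : Fin N → ℕ
  token : Fin N → ℕ
  choosing : Fin N → Bool
  pc : Fin N → GLBPc

def glbInit (N : ℕ) : GLBState N :=
  { session := fun _ => 0, token := fun _ => 0, choosing := fun _ => false,
    pc := fun _ => GLBPc.remainder }

/-- One atomic step of process `i` of the GLB algorithm, transforming state `st`
into `st'`.  A process at `remainder` may stay put or pick an arbitrary positive
session; a failed busy-wait check is a stuttering step; a process in the CS may
stay or move to the exit section. -/
def glbStep {N : ℕ} (st : GLBState N) (i : Fin N) (st' : GLBState N) : Prop :=
  match st.pc i with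
  | .remainder =>
      st' = st ∨ ∃ s : ℕ, 0 < s ∧
        st' = { st with pc := Function.update st.pc i (.setChoosing s) }
  | .setChoosing s =>
      st' = { st with choosing := Function.update st.choosing i true,
                      pc := Function.update st.pc i (.setSession s) }
  | .setSession s =>
      st' = { st with session := Function.update st.session i s,
                      pc := Function.update st.pc i (.scan s 0 0) }
  | .scan s j m =>
      if h : j < N then
        st' = { st with pc := Function.update st.pc i (.scan s (j+1)
                  (if (⟨j, h⟩ : Fin N) = i then m else max m (st.token ⟨j, h⟩))) }
      else
        st' = { st with pc := Function.update st.pc i (.setToken s m) }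
  | .setToken s m =>
      st' = { st with token := Function.update st.token i (m + 1),
                      pc := Function.update st.pc i (.unsetChoosing s) }
  | .unsetChoosing s =>
      st' = { st with choosing := Function.update st.choosing i false,
                      pc := Function.update st.pc i (.wait1 s 0) }
  | .wait1 s j =>
      if h : j < N then
        if st.choosing ⟨j, h⟩ = false ∨ st.session ⟨j, h⟩ = 0 ∨ st.session ⟨j, h⟩ = s then
          st' = { st with pc := Function.update st.pc i (.wait2 s j) }
        else st' = st
      else
        st' = { st with pc := Function.update st.pc i (.cs s) }
  | .wait2 s j =>
      if h : j < N then
        if (st.token i < st.token ⟨j, h⟩ ∨ (st.token i = st.token ⟨j, h⟩ ∧ i.val < j)) ∨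
            st.token ⟨j, h⟩ = 0 ∨ st.session ⟨j, h⟩ = 0 ∨ st.session ⟨j, h⟩ = s then
          st' = { st with pc := Function.update st.pc i (.wait1 s (j+1)) }
        else st' = st
      else st' = st
  | .cs _ =>
      st' = st ∨ st' = { st with pc := Function.update st.pc i .exit1 }
  | .exit1 =>
      st' = { st with token := Function.update st.token i 0,
                      pc := Function.update st.pc i .exit2 }
  | .exit2 =>
      st' = { st with session := Function.update st.session i 0,
                      pc := Function.update st.pc i .remainder }

/-- An execution of the GLB algorithm: an interleaving of atomic steps
(`sched n` is the process taking the `n`-th step), starting from the initial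
state, in which every process outside its remainder section eventually takes
its next step. -/
structure GLBExec (N : ℕ) where
  state : ℕ → GLBState N
  sched : ℕ → Fin N
  init : state 0 = glbInit N
  step : ∀ n, glbStep (state n) (sched n) (state (n + 1))
  fair : ∀ (i : Fin N) (n : ℕ), (state n).pc i ≠ GLBPc.remainder →
           ∃ m, n ≤ m ∧ sched m = i

/-- Process `i` is in the critical section. -/
def glbInCS {N : ℕ} (st : GLBState N) (i : Fin N) : Prop := ∃ s, st.pc i = GLBPc.cs s

/-- Process `i` is in the entry section (doorway or waiting room). -/
def glbInEntry {N : ℕ} (st : GLBState N) (i : Fin N) : Prop :=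
  match st.pc i with
  | .remainder => False
  | .cs _ => False
  | .exit1 => False
  | .exit2 => False
  | _ => True

/-- At step `n`, process `i` leaves the remainder and enters the doorway,
requesting session `s`. -/
def glbEntersDoorway {N : ℕ} (e : GLBExec N) (i : Fin N) (s : ℕ) (n : ℕ) : Prop :=
  (e.state n).pc i = GLBPc.remainder ∧ (e.state (n+1)).pc i = GLBPc.setChoosing s

/-- At step `n`, process `i` completes its doorway (executes Choosing[i]:=false). -/
def glbCompletesDoorway {N : ℕ} (e : GLBExec N) (i : Fin N) (s : ℕ) (n : ℕ) : Prop :=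
  (e.state n).pc i = GLBPc.unsetChoosing s ∧ (e.state (n+1)).pc i = GLBPc.wait1 s 0

/-- At step `n`, process `i` enters the critical section. -/
def glbEntersCS {N : ℕ} (e : GLBExec N) (i : Fin N) (n : ℕ) : Prop :=
  ¬ glbInCS (e.state n) i ∧ glbInCS (e.state (n+1)) i

/-- Process `i` does not pass through the remainder section during `(a, b]`
(so times `a` and `b` belong to the same invocation of `i`). -/
def glbActiveThrough {N : ℕ} (e : GLBExec N) (i : Fin N) (a b : ℕ) : Prop :=
  ∀ k, a < k → k ≤ b → (e.state k).pc i ≠ GLBPc.remainder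

/-! ### Remote memory references in the cache-coherent (CC) model -/

/-- The shared variables of the GLB algorithm. -/
inductive GLBVar (N : ℕ) : Type
  | session (j : Fin N)
  | token (j : Fin N)
  | choosing (j : Fin N)
  deriving DecidableEq

/-- Shared variables read by the next step of process `i` in state `st`. -/
def glbReads {N : ℕ} (st : GLBState N) (i : Fin N) : Finset (GLBVar N) :=
  match st.pc i with
  | .scan _ j _ => if h : j < N then {GLBVar.token ⟨j, h⟩} else ∅
  | .wait1 _ j => if h : j < N then {GLBVar.choosing ⟨j, h⟩, GLBVar.session ⟨j, h⟩} else ∅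
  | .wait2 _ j => if h : j < N then
      {GLBVar.token i, GLBVar.token ⟨j, h⟩, GLBVar.session ⟨j, h⟩} else ∅
  | _ => ∅

/-- Shared variables written by the next step of process `i` in state `st`. -/
def glbWrites {N : ℕ} (st : GLBState N) (i : Fin N) : Finset (GLBVar N) :=
  match st.pc i with
  | .setChoosing _ => {GLBVar.choosing i}
  | .setSession _ => {GLBVar.session i}
  | .setToken _ _ => {GLBVar.token i}
  | .unsetChoosing _ => {GLBVar.choosing i}
  | .exit1 => {GLBVar.token i}
  | .exit2 => {GLBVar.session i}
  | _ => ∅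

/-- `glbCached e n p v` holds iff just before step `n`, process `p` holds a valid
cached copy of variable `v`: a copy is acquired by reading `v` and stays valid
until some process writes `v`. -/
def glbCached {N : ℕ} (e : GLBExec N) : ℕ → Fin N → GLBVar N → Bool
  | 0, _, _ => false
  | n + 1, p, v =>
      (glbCached e n p v || (decide (e.sched n = p) && decide (v ∈ glbReads (e.state n) p)))
        && ! decide (v ∈ glbWrites (e.state n) (e.sched n))

/-- The number of remote memory references incurred by step `n` of the execution:
every write is an RMR, and a read is an RMR iff the stepping process holds no
valid cached copy. -/
def glbStepRMR {N : ℕ} (e : GLBExec N) (n : ℕ) : ℕ :=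
  (glbWrites (e.state n) (e.sched n)).card +
    ((glbReads (e.state n) (e.sched n)).filter
      (fun v => glbCached e n (e.sched n) v = false)).card

lemma glb_step_frame {N : ℕ} {st st' : GLBState N} {q i : Fin N}
    (h : glbStep st q st') (hne : i ≠ q) :
    st'.pc i = st.pc i ∧ st'.session i = st.session i ∧ st'.token i = st.token i := by
  unfold glbStep at h
  split at h
  all_goals try (repeat split at h)
  all_goals first
    | (rcases h with rfl | ⟨s, hs, rfl⟩) <;> simp [Function.update_apply, hne]
    | (rcases h with rfl | rfl) <;> simp [Function.update_apply, hne]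
    | (subst h; simp [Function.update_apply, hne])

def glbInvP {N : ℕ} (st : GLBState N) (p : Fin N) : Prop :=
  match st.pc p with
  | .remainder => True
  | .setChoosing s => 0 < s
  | .setSession s => 0 < s
  | .scan s _ _ => 0 < s ∧ st.session p = s
  | .setToken s _ => 0 < s ∧ st.session p = s
  | .unsetChoosing s => 0 < s ∧ st.session p = s ∧ 0 < st.token p
  | .wait1 s _ => 0 < s ∧ st.session p = s ∧ 0 < st.token p
  | .wait2 s _ => 0 < s ∧ st.session p = s ∧ 0 < st.token p
  | .cs s => 0 < s ∧ st.session p = s ∧ 0 < st.token p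
  | .exit1 => True
  | .exit2 => True

lemma glb_inv_step {N : ℕ} {st st' : GLBState N} {q : Fin N}
    (h : glbStep st q st') (hinv : ∀ p, glbInvP st p) : ∀ p, glbInvP st' p := by
  intro p
  by_cases hpq : p = q
  · subst hpq
    have hp := hinv p
    unfold glbStep at h
    unfold glbInvP at hp ⊢
    split at h <;> rename_i hpc <;> simp only [hpc] at hp
    all_goals try (repeat split at h)
    all_goals first
      | (rcases h with rfl | ⟨s, hs, rfl⟩) <;>
          simp_all [Function.update_apply, hpc]
      | (rcases h with rfl | rfl) <;>
          simp_all [Function.update_apply, hpc]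
      | (subst h; simp_all [Function.update_apply, hpc])
  · have ⟨h1, h2, h3⟩ := glb_step_frame h hpq
    unfold glbInvP
    simp only [h1, h2, h3]
    exact hinv p

lemma glb_inv_all {N : ℕ} (e : GLBExec N) : ∀ n p, glbInvP (e.state n) p := by
  intro n
  induction n with
  | zero => intro p; rw [e.init]; unfold glbInvP glbInit; simp
  | succ n ih => exact glb_inv_step (e.step n) ih

/-- Auxiliary invariant used in the FCFS proof: within the relevant window,
process `j` is still in its doorway or stuck in the waiting room at an index
`≤ i`, with quantitative information about its (future) token. -/
def glbW {N : ℕ} (e : GLBExec N) (i j : Fin N) (sj : ℕ) (k : ℕ) : Prop :=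
  (e.state k).pc j = .setChoosing sj ∨
  (e.state k).pc j = .setSession sj ∨
  (∃ w m, (e.state k).pc j = .scan sj w m ∧ (i.val < w → (e.state k).token i ≤ m)) ∨
  (∃ m, (e.state k).pc j = .setToken sj m ∧ (e.state k).token i ≤ m) ∨
  ((e.state k).pc j = .unsetChoosing sj ∧ (e.state k).token i < (e.state k).token j) ∨
  (∃ w, w ≤ i.val ∧ ((e.state k).pc j = .wait1 sj w ∨ (e.state k).pc j = .wait2 sj w) ∧
    (e.state k).token i < (e.state k).token j)

/-- **FCFS for the GLB algorithm.**  If process `i` completes its doorway (at step `d`,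
requesting session `si`) before process `j` enters its doorway (at step `a`, requesting a
different session `sj`), then `j` does not enter the critical section before `i` does:
whenever `j` enters the CS at step `c2` of that invocation, `i` has already entered the CS,
at some step `c1 ≤ c2` of the invocation whose doorway was completed at `d`. -/
theorem glb_fcfs {N : ℕ} (e : GLBExec N) (i j : Fin N) (si sj : ℕ)
    (hij : i ≠ j) (hs : si ≠ sj)
    (d : ℕ) (hd : glbCompletesDoorway e i si d)
    (a : ℕ) (ha : glbEntersDoorway e j sj a) (hda : d < a)
    (c2 : ℕ) (hc2 : glbEntersCS e j c2) (hac : a < c2)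
    (hact : glbActiveThrough e j a c2) :
    ∃ c1, c1 ≤ c2 ∧ glbEntersCS e i c1 ∧ d < c1 ∧ glbActiveThrough e i d c1 := by
  classical
  have key : ∀ K, K ≤ c2+1 →
      (∀ k, d+1 ≤ k → k ≤ K → ∃ w, (e.state k).pc i = .wait1 si w ∨ (e.state k).pc i = .wait2 si w)
      ∨ (∃ c1, c1 ≤ c2 ∧ glbEntersCS e i c1 ∧ d < c1 ∧ glbActiveThrough e i d c1) := by
    intro K
    induction K with
    | zero => intro _; left; intro k hk1 hk2; omega
    | succ K ih =>
      intro hK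
      rcases ih (by omega) with hQ | hdone
      · by_cases hKd : K + 1 ≤ d
        · left; intro k hk1 hk2; omega
        · by_cases hKd' : K + 1 = d + 1
          · left; intro k hk1 hk2
            rcases Nat.lt_or_ge k (K+1) with hk | hk
            · exact hQ k hk1 (by omega)
            · have : k = d + 1 := by omega
              subst this
              exact ⟨0, Or.inl hd.2⟩
          · have hKd2 : d + 1 ≤ K := by omega
            have ext1 : (∃ w, (e.state (K+1)).pc i = .wait1 si w ∨ (e.state (K+1)).pc i = .wait2 si w) →
                ((∀ k, d+1 ≤ k → k ≤ K+1 → ∃ w, (e.state k).pc i = .wait1 si w ∨ (e.state k).pc i = .wait2 si w)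
                ∨ (∃ c1, c1 ≤ c2 ∧ glbEntersCS e i c1 ∧ d < c1 ∧ glbActiveThrough e i d c1)) := by
              intro hnew
              left; intro k h1 h2
              rcases Nat.lt_or_ge k (K+1) with hk | hk
              · exact hQ k h1 (by omega)
              · have : k = K+1 := by omega
                subst this; exact hnew
            obtain ⟨w, hpci⟩ := hQ K hKd2 le_rfl
            by_cases hsk : e.sched K = i
            · have h := e.step K
              rw [hsk] at h
              unfold glbStep at h
              rcases hpci with h0 | h0 <;> simp only [h0] at h
              · by_cases hwN : w < N
                · rw [dif_pos hwN] at h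
                  split at h
                  · exact ext1 ⟨w, Or.inr (by rw [h]; simp)⟩
                  · exact ext1 ⟨w, Or.inl (by rw [h]; exact h0)⟩
                · rw [dif_neg hwN] at h
                  right
                  refine ⟨K, by omega, ⟨?_, ?_⟩, by omega, ?_⟩
                  · rintro ⟨s, hcs⟩; rw [h0] at hcs; exact GLBPc.noConfusion hcs
                  · exact ⟨si, by rw [h]; simp⟩
                  · intro k h1 h2
                    obtain ⟨w', hw'⟩ := hQ k h1 h2
                    rcases hw' with h' | h' <;> simp [h']
              · by_cases hwN : w < N
                · rw [dif_pos hwN] at h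
                  split at h
                  · exact ext1 ⟨w+1, Or.inl (by rw [h]; simp)⟩
                  · exact ext1 ⟨w, Or.inr (by rw [h]; exact h0)⟩
                · rw [dif_neg hwN] at h
                  exact ext1 ⟨w, Or.inr (by rw [h]; exact h0)⟩
            · have hfr := (glb_step_frame (e.step K) (fun hh => hsk hh.symm)).1
              exact ext1 ⟨w, by rw [hfr]; exact hpci⟩
      · exact Or.inr hdone
  rcases key (c2+1) le_rfl with hw | hdone
  · exfalso
    have hinv := glb_inv_all e
    have hifacts : ∀ k, d+1 ≤ k → k ≤ c2+1 →
        (e.state k).session i = si ∧ 0 < si ∧ 0 < (e.state k).token i := by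
      intro k h1 h2
      obtain ⟨w, hpci⟩ := hw k h1 h2
      have hp := hinv k i
      unfold glbInvP at hp
      rcases hpci with h' | h' <;> simp only [h'] at hp <;> exact ⟨hp.2.1, hp.1, hp.2.2⟩
    have htoki : ∀ k, d+1 ≤ k → k ≤ c2 → (e.state (k+1)).token i = (e.state k).token i := by
      intro k h1 h2
      by_cases hsk : e.sched k = i
      · have h := e.step k
        rw [hsk] at h
        unfold glbStep at h
        obtain ⟨w, hpci⟩ := hw k h1 (by omega)
        rcases hpci with h' | h' <;> simp only [h'] at h
        · by_cases hwN : w < N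
          · rw [dif_pos hwN] at h
            split at h <;> rw [h]
          · rw [dif_neg hwN] at h; rw [h]
        · by_cases hwN : w < N
          · rw [dif_pos hwN] at h
            split at h <;> rw [h]
          · rw [dif_neg hwN] at h; rw [h]
      · exact (glb_step_frame (e.step k) (fun hh => hsk hh.symm)).2.2
    have hW : ∀ k, a+1 ≤ k → k ≤ c2 → glbW e i j sj k := by
      intro k
      induction k with
      | zero => intro h1 h2; omega
      | succ k ih =>
        intro h1 h2
        by_cases hka : k + 1 = a + 1
        · have : k = a := by omega
          subst this
          exact Or.inl ha.2
        · have hk1 : a + 1 ≤ k := by omega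
          have hWk := ih hk1 (by omega)
          have htk : (e.state (k+1)).token i = (e.state k).token i := htoki k (by omega) (by omega)
          by_cases hsk : e.sched k = j
          · have h := e.step k
            rw [hsk] at h
            unfold glbStep at h
            rcases hWk with h0 | h0 | ⟨w, m, h0, hm⟩ | ⟨m, h0, hm⟩ | ⟨h0, hm⟩ | ⟨w, hwle, h0, hm⟩
            · simp only [h0] at h
              exact Or.inr (Or.inl (by rw [h]; simp))
            · simp only [h0] at h
              refine Or.inr (Or.inr (Or.inl ⟨0, 0, by rw [h]; simp, by omega⟩))
            · simp only [h0] at h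
              by_cases hwN : w < N
              · rw [dif_pos hwN] at h
                refine Or.inr (Or.inr (Or.inl ⟨w+1,
                  if (⟨w, hwN⟩ : Fin N) = j then m else max m ((e.state k).token ⟨w, hwN⟩),
                  by rw [h]; simp, ?_⟩))
                intro hiw
                rw [htk]
                by_cases hji : (⟨w, hwN⟩ : Fin N) = j
                · rw [if_pos hji]
                  have hne : i.val ≠ w := by
                    intro hh
                    exact hij (by rw [← hji]; exact Fin.ext hh)
                  exact hm (by omega)
                · rw [if_neg hji]
                  rcases Nat.lt_or_ge i.val w with hc | hc
                  · exact le_trans (hm hc) (le_max_left _ _)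
                  · have hiw' : i.val = w := by omega
                    have hfi : (⟨w, hwN⟩ : Fin N) = i := Fin.ext (by simp [hiw'])
                    rw [hfi]
                    exact le_max_right _ _
              · rw [dif_neg hwN] at h
                refine Or.inr (Or.inr (Or.inr (Or.inl ⟨m, by rw [h]; simp, ?_⟩)))
                rw [htk]
                exact hm (lt_of_lt_of_le i.isLt (le_of_not_gt hwN))
            · simp only [h0] at h
              refine Or.inr (Or.inr (Or.inr (Or.inr (Or.inl ⟨by rw [h]; simp, ?_⟩))))
              rw [htk, h]
              simp only [Function.update_self]
              omega
            · simp only [h0] at h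
              refine Or.inr (Or.inr (Or.inr (Or.inr (Or.inr ⟨0, Nat.zero_le _,
                Or.inl (by rw [h]; simp), ?_⟩))))
              rw [htk, h]
              exact hm
            · rcases h0 with h0 | h0 <;> simp only [h0] at h
              · have hwN : w < N := lt_of_le_of_lt hwle i.isLt
                rw [dif_pos hwN] at h
                split at h
                · exact Or.inr (Or.inr (Or.inr (Or.inr (Or.inr ⟨w, hwle,
                    Or.inr (by rw [h]; simp), by rw [htk, h]; exact hm⟩))))
                · exact Or.inr (Or.inr (Or.inr (Or.inr (Or.inr ⟨w, hwle,
                    Or.inl (by rw [h]; exact h0), by rw [htk, h]; exact hm⟩))))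
              · have hwN : w < N := lt_of_le_of_lt hwle i.isLt
                rw [dif_pos hwN] at h
                rcases Nat.lt_or_ge w i.val with hwi | hwi
                · split at h
                  · exact Or.inr (Or.inr (Or.inr (Or.inr (Or.inr ⟨w+1, by omega,
                      Or.inl (by rw [h]; simp), by rw [htk, h]; exact hm⟩))))
                  · exact Or.inr (Or.inr (Or.inr (Or.inr (Or.inr ⟨w, hwle,
                      Or.inr (by rw [h]; exact h0), by rw [htk, h]; exact hm⟩))))
                · have hiw' : i.val = w := by omega
                  have hfi : (⟨w, hwN⟩ : Fin N) = i := Fin.ext (by simp [hiw'])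
                  rw [hfi] at h
                  obtain ⟨hsess, hsipos, htipos⟩ := hifacts k (by omega) (by omega)
                  rw [if_neg ?_] at h
                  · exact Or.inr (Or.inr (Or.inr (Or.inr (Or.inr ⟨w, hwle,
                      Or.inr (by rw [h]; exact h0), by rw [htk, h]; exact hm⟩))))
                  · rintro ((h' | ⟨h', _⟩) | h' | h' | h')
                    · omega
                    · omega
                    · omega
                    · rw [hsess] at h'; omega
                    · rw [hsess] at h'; exact hs h'
          · obtain ⟨f1, f2, f3⟩ := glb_step_frame (e.step k) (fun hh => hsk hh.symm)
            unfold glbW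
            rw [f1, f3, htk]
            exact hWk
    have hsc2 : e.sched c2 = j := by
      by_contra hne
      have hfr := (glb_step_frame (e.step c2) (fun hh => hne hh.symm)).1
      obtain ⟨s, hcs⟩ := hc2.2
      exact hc2.1 ⟨s, by rw [← hfr]; exact hcs⟩
    have hWc2 := hW c2 (by omega) le_rfl
    have h := e.step c2
    rw [hsc2] at h
    unfold glbStep at h
    obtain ⟨s, hcs⟩ := hc2.2
    rcases hWc2 with h0 | h0 | ⟨w, m, h0, hm⟩ | ⟨m, h0, hm⟩ | ⟨h0, hm⟩ | ⟨w, hwle, h0, hm⟩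
    · simp only [h0] at h
      rw [h] at hcs; simp at hcs
    · simp only [h0] at h
      rw [h] at hcs; simp at hcs
    · simp only [h0] at h
      by_cases hwN : w < N
      · rw [dif_pos hwN] at h; rw [h] at hcs; simp at hcs
      · rw [dif_neg hwN] at h; rw [h] at hcs; simp at hcs
    · simp only [h0] at h
      rw [h] at hcs; simp at hcs
    · simp only [h0] at h
      rw [h] at hcs; simp at hcs
    · rcases h0 with h0 | h0 <;> simp only [h0] at h <;>
        have hwN : w < N := lt_of_le_of_lt hwle i.isLt
      · rw [dif_pos hwN] at h
        split at h
        · rw [h] at hcs; simp at hcs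
        · rw [h, h0] at hcs; simp at hcs
      · rw [dif_pos hwN] at h
        split at h
        · rw [h] at hcs; simp at hcs
        · rw [h, h0] at hcs; simp at hcs
  · exact hdone
end

section
/- In every reachable state of every execution of the Generalized Lamport's Bakery (GLB) algorithm, no two processes that request different sessions are in the critical section at the same time (the Mutual Exclusion property holds). -/
section GLBProofs

open GLBPc

variable {N : ℕ}

def lexLt (st : GLBState N) (i j : Fin N) : Prop :=
  st.token i < st.token j ∨ (st.token i = st.token j ∧ i.val < j.val)

/-- `i` (with session `si` and a fixed positive token) has effectively passed `j`. -/
def before (st : GLBState N) (i : Fin N) (si : ℕ) (j : Fin N) : Prop :=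
  st.session j = 0 ∨ st.session j = si ∨
  (∃ s, st.pc j = GLBPc.setSession s) ∨
  (∃ s k m, st.pc j = GLBPc.scan s k m ∧ (k ≤ i.val ∨ st.token i ≤ m)) ∨
  (∃ s m, st.pc j = GLBPc.setToken s m ∧ st.token i ≤ m) ∨
  (lexLt st i j ∧ ((∃ s, st.pc j = GLBPc.unsetChoosing s) ∨ (∃ s k, st.pc j = GLBPc.wait1 s k) ∨
    (∃ s k, st.pc j = GLBPc.wait2 s k) ∨ (∃ s, st.pc j = GLBPc.cs s) ∨ st.pc j = GLBPc.exit1)) ∨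
  st.pc j = GLBPc.exit2

/-- `i` has passed the wait1-check on `j`. -/
def w1p (st : GLBState N) (i : Fin N) (si : ℕ) (j : Fin N) : Prop :=
  before st i si j ∨ (∃ s k, st.pc j = GLBPc.wait1 s k) ∨ (∃ s k, st.pc j = GLBPc.wait2 s k) ∨
    (∃ s, st.pc j = GLBPc.cs s) ∨ st.pc j = GLBPc.exit1

/-- Basic per-process invariant relating the shared variables to the pc. -/
def okP (st : GLBState N) (i : Fin N) : Prop :=
  match st.pc i with
  | .remainder => st.session i = 0 ∧ st.token i = 0 ∧ st.choosing i = false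
  | .setChoosing s => 0 < s ∧ st.session i = 0 ∧ st.token i = 0 ∧ st.choosing i = false
  | .setSession s => 0 < s ∧ st.session i = 0 ∧ st.token i = 0 ∧ st.choosing i = true
  | .scan s _ _ => 0 < s ∧ st.session i = s ∧ st.token i = 0 ∧ st.choosing i = true
  | .setToken s _ => 0 < s ∧ st.session i = s ∧ st.token i = 0 ∧ st.choosing i = true
  | .unsetChoosing s => 0 < s ∧ st.session i = s ∧ 0 < st.token i ∧ st.choosing i = true
  | .wait1 s _ => 0 < s ∧ st.session i = s ∧ 0 < st.token i ∧ st.choosing i = false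
  | .wait2 s _ => 0 < s ∧ st.session i = s ∧ 0 < st.token i ∧ st.choosing i = false
  | .cs s => 0 < s ∧ st.session i = s ∧ 0 < st.token i ∧ st.choosing i = false
  | .exit1 => 0 < st.token i ∧ st.choosing i = false
  | .exit2 => st.token i = 0 ∧ st.choosing i = false

def clauses (st : GLBState N) (i j : Fin N) : Prop :=
  (∀ s k, st.pc i = GLBPc.wait1 s k → j.val < k → before st i s j) ∧
  (∀ s k, st.pc i = GLBPc.wait2 s k → j.val < k → before st i s j) ∧
  (∀ s k, st.pc i = GLBPc.wait2 s k → j.val = k → w1p st i s j) ∧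
  (∀ s, st.pc i = GLBPc.cs s → before st i s j)

def glbInv (st : GLBState N) : Prop :=
  (∀ i, okP st i) ∧ ∀ i j : Fin N, i ≠ j → clauses st i j

lemma before_congr {st st' : GLBState N} {i j : Fin N} {si : ℕ}
    (h1 : st'.session j = st.session j) (h2 : st'.pc j = st.pc j)
    (h3 : st'.token i = st.token i) (h4 : st'.token j = st.token j) :
    before st i si j → before st' i si j := by
  simp only [before, lexLt, h1, h2, h3, h4]; exact id

lemma w1p_congr {st st' : GLBState N} {i j : Fin N} {si : ℕ}
    (h1 : st'.session j = st.session j) (h2 : st'.pc j = st.pc j)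
    (h3 : st'.token i = st.token i) (h4 : st'.token j = st.token j) :
    w1p st i si j → w1p st' i si j := by
  simp only [w1p, before, lexLt, h1, h2, h3, h4]; exact id

lemma okP_congr {st st' : GLBState N} {q : Fin N}
    (h1 : st'.session q = st.session q) (h2 : st'.pc q = st.pc q)
    (h3 : st'.token q = st.token q) (h4 : st'.choosing q = st.choosing q) :
    okP st q → okP st' q := by
  simp only [okP, h1, h2, h3, h4]; exact id

lemma glbInv_of {st st' : GLBState N} {p : Fin N}
    (hq : ∀ q, q ≠ p → st'.session q = st.session q ∧ st'.token q = st.token q ∧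
      st'.choosing q = st.choosing q ∧ st'.pc q = st.pc q)
    (hok : ∀ i, okP st i) (hpair : ∀ i j : Fin N, i ≠ j → clauses st i j)
    (hokp : okP st' p)
    (hview : ∀ i, i ≠ p → ∀ si,
      (before st i si p → before st' i si p) ∧ (w1p st i si p → w1p st' i si p))
    (hself : ∀ j, p ≠ j → clauses st' p j) : glbInv st' := by
  constructor
  · intro q
    by_cases hqp : q = p
    · exact hqp ▸ hokp
    · obtain ⟨e1, e2, e3, e4⟩ := hq q hqp
      exact okP_congr e1 e4 e2 e3 (hok q)
  · intro i j hij
    by_cases hip : i = p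
    · exact hip ▸ hself j (hip ▸ hij)
    · obtain ⟨ei1, ei2, ei3, ei4⟩ := hq i hip
      by_cases hjp : j = p
      · subst hjp
        obtain ⟨c1, c2, c3, c4⟩ := hpair i j hij
        refine ⟨?_, ?_, ?_, ?_⟩
        · intro s k h hk
          exact (hview i hip s).1 (c1 s k (ei4 ▸ h) hk)
        · intro s k h hk
          exact (hview i hip s).1 (c2 s k (ei4 ▸ h) hk)
        · intro s k h hk
          exact (hview i hip s).2 (c3 s k (ei4 ▸ h) hk)
        · intro s h
          exact (hview i hip s).1 (c4 s (ei4 ▸ h))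
      · obtain ⟨ej1, ej2, ej3, ej4⟩ := hq j hjp
        obtain ⟨c1, c2, c3, c4⟩ := hpair i j hij
        refine ⟨?_, ?_, ?_, ?_⟩
        · intro s k h hk
          exact before_congr ej1 ej4 ei2 ej2 (c1 s k (ei4 ▸ h) hk)
        · intro s k h hk
          exact before_congr ej1 ej4 ei2 ej2 (c2 s k (ei4 ▸ h) hk)
        · intro s k h hk
          exact w1p_congr ej1 ej4 ei2 ej2 (c3 s k (ei4 ▸ h) hk)
        · intro s h
          exact before_congr ej1 ej4 ei2 ej2 (c4 s (ei4 ▸ h))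

lemma glbInv_init : glbInv (glbInit N) := by
  constructor
  · intro i; simp [okP, glbInit]
  · intro i j hij
    refine ⟨?_, ?_, ?_, ?_⟩ <;> intro _ <;> simp [glbInit]

end GLBProofs
namespace GLBH
open GLBPc
variable {N : ℕ} {st : GLBState N} {i j : Fin N} {si s k m : ℕ}

lemma before_1 (h : st.session j = 0) : before st i si j := Or.inl h
lemma before_2 (h : st.session j = si) : before st i si j := Or.inr (Or.inl h)
lemma before_3 (h : st.pc j = GLBPc.setSession s) : before st i si j :=
  Or.inr (Or.inr (Or.inl ⟨s, h⟩))
lemma before_4 (h : st.pc j = GLBPc.scan s k m) (hc : k ≤ i.val ∨ st.token i ≤ m) :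
    before st i si j := Or.inr (Or.inr (Or.inr (Or.inl ⟨s, k, m, h, hc⟩)))
lemma before_5 (h : st.pc j = GLBPc.setToken s m) (hc : st.token i ≤ m) :
    before st i si j := Or.inr (Or.inr (Or.inr (Or.inr (Or.inl ⟨s, m, h, hc⟩))))
lemma before_6 (hl : lexLt st i j)
    (h : (∃ s, st.pc j = GLBPc.unsetChoosing s) ∨ (∃ s k, st.pc j = GLBPc.wait1 s k) ∨
      (∃ s k, st.pc j = GLBPc.wait2 s k) ∨ (∃ s, st.pc j = GLBPc.cs s) ∨
      st.pc j = GLBPc.exit1) : before st i si j :=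
  Or.inr (Or.inr (Or.inr (Or.inr (Or.inr (Or.inl ⟨hl, h⟩)))))
lemma before_7 (h : st.pc j = GLBPc.exit2) : before st i si j :=
  Or.inr (Or.inr (Or.inr (Or.inr (Or.inr (Or.inr h)))))

lemma tokenPos_pc {q : Fin N} (hok : okP st q) (h : 0 < st.token q) :
    (∃ s, st.pc q = GLBPc.unsetChoosing s) ∨ (∃ s k, st.pc q = GLBPc.wait1 s k) ∨
    (∃ s k, st.pc q = GLBPc.wait2 s k) ∨ (∃ s, st.pc q = GLBPc.cs s) ∨
    st.pc q = GLBPc.exit1 := by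
  cases hpc : st.pc q <;> simp_all [okP]

end GLBH

namespace GLBH
variable {N : ℕ}
lemma w1p_mono {st st' : GLBState N} {i p : Fin N} {si : ℕ}
    (hb : before st i si p → before st' i si p)
    (hr : ((∃ s k, st.pc p = GLBPc.wait1 s k) ∨ (∃ s k, st.pc p = GLBPc.wait2 s k) ∨
      (∃ s, st.pc p = GLBPc.cs s) ∨ st.pc p = GLBPc.exit1) → w1p st' i si p) :
    (before st i si p → before st' i si p) ∧ (w1p st i si p → w1p st' i si p) :=
  ⟨hb, fun h => h.elim (fun h => Or.inl (hb h)) hr⟩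
end GLBH
section GLBStep
open GLBPc GLBH
variable {N : ℕ}

set_option maxHeartbeats 4000000 in
lemma glbInv_step {st st' : GLBState N} {p : Fin N} (hinv : glbInv st)
    (hstep : glbStep st p st') : glbInv st' := by
  obtain ⟨hok, hpair⟩ := hinv
  have hokp := hok p
  cases hpc : st.pc p with
  | remainder =>
    simp only [glbStep, hpc] at hstep
    simp only [okP, hpc] at hokp
    rcases hstep with rfl | ⟨s, hs, rfl⟩
    · exact ⟨hok, hpair⟩
    · refine glbInv_of (st := st) (p := p) ?_ hok hpair ?_ ?_ ?_
      · intro q hqp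
        refine ⟨?_, ?_, ?_, ?_⟩ <;> simp [Function.update_apply, hqp]
      · simp [okP, Function.update_self, hs, hokp.1, hokp.2.1, hokp.2.2]
      · intro i hip si
        have hb : before (⟨st.session, st.token, st.choosing,
            Function.update st.pc p (GLBPc.setChoosing s)⟩ : GLBState N) i si p :=
          before_1 hokp.1
        exact ⟨fun _ => hb, fun _ => Or.inl hb⟩
      · intro j hpj
        refine ⟨fun s' k h _ => ?_, fun s' k h _ => ?_, fun s' k h _ => ?_, fun s' h => ?_⟩ <;>
          simp [Function.update_self] at h
  | setChoosing s =>
    simp only [glbStep, hpc] at hstep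
    simp only [okP, hpc] at hokp
    obtain ⟨hs0, hses, htk, hch⟩ := hokp
    subst hstep
    refine glbInv_of (st := st) (p := p) ?_ hok hpair ?_ ?_ ?_
    · intro q hqp
      refine ⟨?_, ?_, ?_, ?_⟩ <;> simp [Function.update_apply, hqp]
    · simp [okP, Function.update_self, hs0, hses, htk]
    · intro i hip si
      have hb : before (⟨st.session, st.token, Function.update st.choosing p true,
          Function.update st.pc p (GLBPc.setSession s)⟩ : GLBState N) i si p :=
        before_1 hses
      exact ⟨fun _ => hb, fun _ => Or.inl hb⟩
    · intro j hpj
      refine ⟨fun s' k h _ => ?_, fun s' k h _ => ?_, fun s' k h _ => ?_, fun s' h => ?_⟩ <;>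
        simp [Function.update_self] at h
  | setSession s =>
    simp only [glbStep, hpc] at hstep
    simp only [okP, hpc] at hokp
    obtain ⟨hs0, hses, htk, hch⟩ := hokp
    subst hstep
    refine glbInv_of (st := st) (p := p) ?_ hok hpair ?_ ?_ ?_
    · intro q hqp
      refine ⟨?_, ?_, ?_, ?_⟩ <;> simp [Function.update_apply, hqp]
    · simp [okP, Function.update_self, hs0, htk, hch]
    · intro i hip si
      have hb : before (⟨Function.update st.session p s, st.token, st.choosing,
          Function.update st.pc p (GLBPc.scan s 0 0)⟩ : GLBState N) i si p :=
        before_4 (Function.update_self _ _ _) (Or.inl (Nat.zero_le _))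
      exact ⟨fun _ => hb, fun _ => Or.inl hb⟩
    · intro j hpj
      refine ⟨fun s' k h _ => ?_, fun s' k h _ => ?_, fun s' k h _ => ?_, fun s' h => ?_⟩ <;>
        simp [Function.update_self] at h
  | scan s k m =>
    simp only [glbStep, hpc] at hstep
    simp only [okP, hpc] at hokp
    obtain ⟨hs0, hses, htk, hch⟩ := hokp
    by_cases hk : k < N
    · rw [dif_pos hk] at hstep
      subst hstep
      refine glbInv_of (st := st) (p := p) ?_ hok hpair ?_ ?_ ?_
      · intro q hqp
        refine ⟨?_, ?_, ?_, ?_⟩ <;> simp [Function.update_apply, hqp]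
      · simp [okP, Function.update_self, hs0, hses, htk, hch]
      · intro i hip si
        refine w1p_mono ?_ ?_
        · intro hb
          rcases hb with h | h | ⟨s', h⟩ | ⟨s', k', m', h, hkm⟩ | ⟨s', m', h, hm⟩ | ⟨hl, h5⟩ | h
          · exact before_1 h
          · exact before_2 h
          · simp [hpc] at h
          · rw [hpc] at h
            simp only [GLBPc.scan.injEq] at h
            obtain ⟨rfl, rfl, rfl⟩ := h
            refine before_4 (Function.update_self _ _ _) ?_
            rcases hkm with hki | him
            · rcases Nat.lt_or_ge k i.val with h1 | h1
              · exact Or.inl h1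
              · have hkie : k = i.val := le_antisymm hki h1
                have hfin : (⟨k, hk⟩ : Fin N) = i := Fin.ext hkie
                rw [hfin, if_neg hip]
                exact Or.inr (le_max_right _ _)
            · refine Or.inr ?_
              split
              · exact him
              · exact le_trans him (le_max_left _ _)
          · simp [hpc] at h
          · rcases h5 with ⟨_, h⟩ | ⟨_, _, h⟩ | ⟨_, _, h⟩ | ⟨_, h⟩ | h <;> simp [hpc] at h
          · simp [hpc] at h
        · intro h
          rcases h with ⟨_, _, h⟩ | ⟨_, _, h⟩ | ⟨_, h⟩ | h <;> simp [hpc] at h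
      · intro j hpj
        refine ⟨fun s' k' h _ => ?_, fun s' k' h _ => ?_, fun s' k' h _ => ?_, fun s' h => ?_⟩ <;>
          simp [Function.update_self] at h
    · rw [dif_neg hk] at hstep
      subst hstep
      refine glbInv_of (st := st) (p := p) ?_ hok hpair ?_ ?_ ?_
      · intro q hqp
        refine ⟨?_, ?_, ?_, ?_⟩ <;> simp [Function.update_apply, hqp]
      · simp [okP, Function.update_self, hs0, hses, htk, hch]
      · intro i hip si
        refine w1p_mono ?_ ?_
        · intro hb
          rcases hb with h | h | ⟨s', h⟩ | ⟨s', k', m', h, hkm⟩ | ⟨s', m', h, hm⟩ | ⟨hl, h5⟩ | h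
          · exact before_1 h
          · exact before_2 h
          · simp [hpc] at h
          · rw [hpc] at h
            simp only [GLBPc.scan.injEq] at h
            obtain ⟨rfl, rfl, rfl⟩ := h
            refine before_5 (Function.update_self _ _ _) ?_
            rcases hkm with hki | him
            · have := i.isLt; omega
            · exact him
          · simp [hpc] at h
          · rcases h5 with ⟨_, h⟩ | ⟨_, _, h⟩ | ⟨_, _, h⟩ | ⟨_, h⟩ | h <;> simp [hpc] at h
          · simp [hpc] at h
        · intro h
          rcases h with ⟨_, _, h⟩ | ⟨_, _, h⟩ | ⟨_, h⟩ | h <;> simp [hpc] at h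
      · intro j hpj
        refine ⟨fun s' k' h _ => ?_, fun s' k' h _ => ?_, fun s' k' h _ => ?_, fun s' h => ?_⟩ <;>
          simp [Function.update_self] at h
  | setToken s m =>
    simp only [glbStep, hpc] at hstep
    simp only [okP, hpc] at hokp
    obtain ⟨hs0, hses, htk, hch⟩ := hokp
    subst hstep
    refine glbInv_of (st := st) (p := p) ?_ hok hpair ?_ ?_ ?_
    · intro q hqp
      refine ⟨?_, ?_, ?_, ?_⟩ <;> simp [Function.update_apply, hqp]
    · simp [okP, Function.update_self, hs0, hses, Nat.succ_pos, hch]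
    · intro i hip si
      refine w1p_mono ?_ ?_
      · intro hb
        rcases hb with h | h | ⟨s', h⟩ | ⟨s', k', m', h, hkm⟩ | ⟨s', m', h, hm⟩ | ⟨hl, h5⟩ | h
        · exact before_1 h
        · exact before_2 h
        · simp [hpc] at h
        · simp [hpc] at h
        · rw [hpc] at h
          simp only [GLBPc.setToken.injEq] at h
          obtain ⟨rfl, rfl⟩ := h
          refine before_6 (Or.inl ?_) (Or.inl ⟨s, Function.update_self _ _ _⟩)
          show Function.update st.token p (m + 1) i < Function.update st.token p (m + 1) p
          rw [Function.update_of_ne hip, Function.update_self]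
          omega
        · rcases h5 with ⟨_, h⟩ | ⟨_, _, h⟩ | ⟨_, _, h⟩ | ⟨_, h⟩ | h <;> simp [hpc] at h
        · simp [hpc] at h
      · intro h
        rcases h with ⟨_, _, h⟩ | ⟨_, _, h⟩ | ⟨_, h⟩ | h <;> simp [hpc] at h
    · intro j hpj
      refine ⟨fun s' k' h _ => ?_, fun s' k' h _ => ?_, fun s' k' h _ => ?_, fun s' h => ?_⟩ <;>
        simp [Function.update_self] at h
  | unsetChoosing s =>
    simp only [glbStep, hpc] at hstep
    simp only [okP, hpc] at hokp
    obtain ⟨hs0, hses, htk, hch⟩ := hokp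
    subst hstep
    refine glbInv_of (st := st) (p := p) ?_ hok hpair ?_ ?_ ?_
    · intro q hqp
      refine ⟨?_, ?_, ?_, ?_⟩ <;> simp [Function.update_apply, hqp]
    · simp [okP, Function.update_self, hs0, hses, htk]
    · intro i hip si
      refine w1p_mono ?_ ?_
      · intro hb
        rcases hb with h | h | ⟨s', h⟩ | ⟨s', k', m', h, hkm⟩ | ⟨s', m', h, hm⟩ | ⟨hl, h5⟩ | h
        · exact before_1 h
        · exact before_2 h
        · simp [hpc] at h
        · simp [hpc] at h
        · simp [hpc] at h
        · exact before_6 hl (Or.inr (Or.inl ⟨s, 0, Function.update_self _ _ _⟩))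
        · simp [hpc] at h
      · intro h
        rcases h with ⟨_, _, h⟩ | ⟨_, _, h⟩ | ⟨_, h⟩ | h <;> simp [hpc] at h
    · intro j hpj
      refine ⟨fun s' k' h hk' => ?_, fun s' k' h _ => ?_, fun s' k' h _ => ?_, fun s' h => ?_⟩
      · simp only [Function.update_self] at h
        injection h with e1 e2
        subst e1; subst e2
        omega
      · simp [Function.update_self] at h
      · simp [Function.update_self] at h
      · simp [Function.update_self] at h
  | wait1 s k =>
    simp only [glbStep, hpc] at hstep
    simp only [okP, hpc] at hokp
    obtain ⟨hs0, hses, htk, hch⟩ := hokp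
    by_cases hk : k < N
    · rw [dif_pos hk] at hstep
      by_cases hc : st.choosing ⟨k, hk⟩ = false ∨ st.session ⟨k, hk⟩ = 0 ∨
          st.session ⟨k, hk⟩ = s
      · rw [if_pos hc] at hstep
        subst hstep
        refine glbInv_of (st := st) (p := p) ?_ hok hpair ?_ ?_ ?_
        · intro q hqp
          refine ⟨?_, ?_, ?_, ?_⟩ <;> simp [Function.update_apply, hqp]
        · simp [okP, Function.update_self, hs0, hses, htk, hch]
        · intro i hip si
          refine w1p_mono ?_ ?_
          · intro hb
            rcases hb with h | h | ⟨s', h⟩ | ⟨s', k', m', h, hkm⟩ | ⟨s', m', h, hm⟩ | ⟨hl, h5⟩ | h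
            · exact before_1 h
            · exact before_2 h
            · simp [hpc] at h
            · simp [hpc] at h
            · simp [hpc] at h
            · exact before_6 hl (Or.inr (Or.inr (Or.inl ⟨s, k, Function.update_self _ _ _⟩)))
            · simp [hpc] at h
          · exact fun _ => Or.inr (Or.inr (Or.inl ⟨s, k, Function.update_self _ _ _⟩))
        · intro j hpj
          obtain ⟨c1, c2, c3, c4⟩ := hpair p j hpj
          have hjp : j ≠ p := Ne.symm hpj
          refine ⟨fun s' k' h _ => ?_, fun s' k' h hk' => ?_, fun s' k' h hk' => ?_,
            fun s' h => ?_⟩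
          · simp [Function.update_self] at h
          · simp only [Function.update_self] at h
            injection h with e1 e2
            subst e1; subst e2
            exact before_congr (st := st) rfl (Function.update_of_ne hjp _ _) rfl rfl (c1 s k hpc hk')
          · simp only [Function.update_self] at h
            injection h with e1 e2
            subst e1; subst e2
            have hfin : (⟨k, hk⟩ : Fin N) = j := Fin.ext hk'.symm
            rw [hfin] at hc
            rcases hc with hcf | h0 | hsj
            · have hokj := hok j
              cases hpcj : st.pc j with
              | remainder =>
                simp only [okP, hpcj] at hokj
                exact Or.inl (before_1 hokj.1)
              | setChoosing s'' =>
                simp only [okP, hpcj] at hokj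
                exact Or.inl (before_1 hokj.2.1)
              | setSession s'' => simp [okP, hpcj, hcf] at hokj
              | scan s'' k'' m'' => simp [okP, hpcj, hcf] at hokj
              | setToken s'' m'' => simp [okP, hpcj, hcf] at hokj
              | unsetChoosing s'' => simp [okP, hpcj, hcf] at hokj
              | wait1 s'' k'' =>
                exact Or.inr (Or.inl ⟨s'', k'', (Function.update_of_ne hjp _ _).trans hpcj⟩)
              | wait2 s'' k'' =>
                exact Or.inr (Or.inr (Or.inl ⟨s'', k'',
                  (Function.update_of_ne hjp _ _).trans hpcj⟩))
              | cs s'' =>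
                exact Or.inr (Or.inr (Or.inr (Or.inl ⟨s'',
                  (Function.update_of_ne hjp _ _).trans hpcj⟩)))
              | exit1 =>
                exact Or.inr (Or.inr (Or.inr (Or.inr
                  ((Function.update_of_ne hjp _ _).trans hpcj))))
              | exit2 =>
                exact Or.inl (before_7 ((Function.update_of_ne hjp _ _).trans hpcj))
            · exact Or.inl (before_1 h0)
            · exact Or.inl (before_2 hsj)
          · simp [Function.update_self] at h
      · rw [if_neg hc] at hstep
        subst hstep
        exact ⟨hok, hpair⟩
    · rw [dif_neg hk] at hstep
      subst hstep
      refine glbInv_of (st := st) (p := p) ?_ hok hpair ?_ ?_ ?_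
      · intro q hqp
        refine ⟨?_, ?_, ?_, ?_⟩ <;> simp [Function.update_apply, hqp]
      · simp [okP, Function.update_self, hs0, hses, htk, hch]
      · intro i hip si
        refine w1p_mono ?_ ?_
        · intro hb
          rcases hb with h | h | ⟨s', h⟩ | ⟨s', k', m', h, hkm⟩ | ⟨s', m', h, hm⟩ | ⟨hl, h5⟩ | h
          · exact before_1 h
          · exact before_2 h
          · simp [hpc] at h
          · simp [hpc] at h
          · simp [hpc] at h
          · exact before_6 hl (Or.inr (Or.inr (Or.inr (Or.inl ⟨s, Function.update_self _ _ _⟩))))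
          · simp [hpc] at h
        · exact fun _ => Or.inr (Or.inr (Or.inr (Or.inl ⟨s, Function.update_self _ _ _⟩)))
      · intro j hpj
        obtain ⟨c1, c2, c3, c4⟩ := hpair p j hpj
        have hjp : j ≠ p := Ne.symm hpj
        refine ⟨fun s' k' h _ => ?_, fun s' k' h _ => ?_, fun s' k' h _ => ?_, fun s' h => ?_⟩
        · simp [Function.update_self] at h
        · simp [Function.update_self] at h
        · simp [Function.update_self] at h
        · simp only [Function.update_self] at h
          injection h with e1
          subst e1
          have hjN : j.val < k := lt_of_lt_of_le j.isLt (le_of_not_gt hk)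
          exact before_congr (st := st) rfl (Function.update_of_ne hjp _ _) rfl rfl (c1 s k hpc hjN)
  | wait2 s k =>
    simp only [glbStep, hpc] at hstep
    simp only [okP, hpc] at hokp
    obtain ⟨hs0, hses, htk, hch⟩ := hokp
    by_cases hk : k < N
    · rw [dif_pos hk] at hstep
      by_cases hc : (st.token p < st.token ⟨k, hk⟩ ∨
            (st.token p = st.token ⟨k, hk⟩ ∧ p.val < k)) ∨
          st.token ⟨k, hk⟩ = 0 ∨ st.session ⟨k, hk⟩ = 0 ∨ st.session ⟨k, hk⟩ = s
      · rw [if_pos hc] at hstep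
        subst hstep
        refine glbInv_of (st := st) (p := p) ?_ hok hpair ?_ ?_ ?_
        · intro q hqp
          refine ⟨?_, ?_, ?_, ?_⟩ <;> simp [Function.update_apply, hqp]
        · simp [okP, Function.update_self, hs0, hses, htk, hch]
        · intro i hip si
          refine w1p_mono ?_ ?_
          · intro hb
            rcases hb with h | h | ⟨s', h⟩ | ⟨s', k', m', h, hkm⟩ | ⟨s', m', h, hm⟩ | ⟨hl, h5⟩ | h
            · exact before_1 h
            · exact before_2 h
            · simp [hpc] at h
            · simp [hpc] at h
            · simp [hpc] at h
            · exact before_6 hl (Or.inr (Or.inl ⟨s, k + 1, Function.update_self _ _ _⟩))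
            · simp [hpc] at h
          · exact fun _ => Or.inr (Or.inl ⟨s, k + 1, Function.update_self _ _ _⟩)
        · intro j hpj
          obtain ⟨c1, c2, c3, c4⟩ := hpair p j hpj
          have hjp : j ≠ p := Ne.symm hpj
          refine ⟨fun s' k' h hk' => ?_, fun s' k' h _ => ?_, fun s' k' h _ => ?_,
            fun s' h => ?_⟩
          · simp only [Function.update_self] at h
            injection h with e1 e2
            subst e1; subst e2
            rcases Nat.lt_or_ge j.val k with hjk | hge
            · exact before_congr (st := st) rfl (Function.update_of_ne hjp _ _) rfl rfl (c2 s k hpc hjk)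
            · have hjk : j.val = k := by omega
              have hfin : (⟨k, hk⟩ : Fin N) = j := Fin.ext hjk.symm
              rw [hfin] at hc
              rcases hc with hlex | h0 | h0 | hsj
              · have hlt : lexLt st p j := by
                  rcases hlex with h | ⟨h1, h2⟩
                  · exact Or.inl h
                  · exact Or.inr ⟨h1, by omega⟩
                have htj : 0 < st.token j := by
                  rcases hlt with h | ⟨h1, _⟩ <;> omega
                exact before_congr (st := st) rfl (Function.update_of_ne hjp _ _) rfl rfl
                  (before_6 hlt (tokenPos_pc (hok j) htj))
              · have hw := c3 s k hpc hjk
                rcases hw with hb | ⟨s'', k'', hpcj⟩ | ⟨s'', k'', hpcj⟩ | ⟨s'', hpcj⟩ | hpcj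
                · exact before_congr (st := st) rfl (Function.update_of_ne hjp _ _) rfl rfl hb
                · have hokj := hok j
                  simp only [okP, hpcj] at hokj
                  obtain ⟨-, -, ht, -⟩ := hokj
                  omega
                · have hokj := hok j
                  simp only [okP, hpcj] at hokj
                  obtain ⟨-, -, ht, -⟩ := hokj
                  omega
                · have hokj := hok j
                  simp only [okP, hpcj] at hokj
                  obtain ⟨-, -, ht, -⟩ := hokj
                  omega
                · have hokj := hok j
                  simp only [okP, hpcj] at hokj
                  obtain ⟨ht, -⟩ := hokj
                  omega
              · exact before_1 h0
              · exact before_2 hsj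
          · simp [Function.update_self] at h
          · simp [Function.update_self] at h
          · simp [Function.update_self] at h
      · rw [if_neg hc] at hstep
        subst hstep
        exact ⟨hok, hpair⟩
    · rw [dif_neg hk] at hstep
      subst hstep
      exact ⟨hok, hpair⟩
  | cs s =>
    simp only [glbStep, hpc] at hstep
    simp only [okP, hpc] at hokp
    obtain ⟨hs0, hses, htk, hch⟩ := hokp
    rcases hstep with rfl | rfl
    · exact ⟨hok, hpair⟩
    · refine glbInv_of (st := st) (p := p) ?_ hok hpair ?_ ?_ ?_
      · intro q hqp
        refine ⟨?_, ?_, ?_, ?_⟩ <;> simp [Function.update_apply, hqp]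
      · simp [okP, Function.update_self, htk, hch]
      · intro i hip si
        refine w1p_mono ?_ ?_
        · intro hb
          rcases hb with h | h | ⟨s', h⟩ | ⟨s', k', m', h, hkm⟩ | ⟨s', m', h, hm⟩ | ⟨hl, h5⟩ | h
          · exact before_1 h
          · exact before_2 h
          · simp [hpc] at h
          · simp [hpc] at h
          · simp [hpc] at h
          · exact before_6 hl (Or.inr (Or.inr (Or.inr (Or.inr (Function.update_self _ _ _)))))
          · simp [hpc] at h
        · exact fun _ => Or.inr (Or.inr (Or.inr (Or.inr (Function.update_self _ _ _))))
      · intro j hpj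
        refine ⟨fun s' k h _ => ?_, fun s' k h _ => ?_, fun s' k h _ => ?_, fun s' h => ?_⟩ <;>
          simp [Function.update_self] at h
  | exit1 =>
    simp only [glbStep, hpc] at hstep
    simp only [okP, hpc] at hokp
    obtain ⟨htk, hch⟩ := hokp
    subst hstep
    refine glbInv_of (st := st) (p := p) ?_ hok hpair ?_ ?_ ?_
    · intro q hqp
      refine ⟨?_, ?_, ?_, ?_⟩ <;> simp [Function.update_apply, hqp]
    · simp [okP, Function.update_self, hch]
    · intro i hip si
      refine w1p_mono ?_ ?_
      · intro hb
        rcases hb with h | h | ⟨s', h⟩ | ⟨s', k', m', h, hkm⟩ | ⟨s', m', h, hm⟩ | ⟨hl, h5⟩ | h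
        · exact before_1 h
        · exact before_2 h
        · simp [hpc] at h
        · simp [hpc] at h
        · simp [hpc] at h
        · exact before_7 (Function.update_self _ _ _)
        · simp [hpc] at h
      · intro h
        rcases h with ⟨_, _, h⟩ | ⟨_, _, h⟩ | ⟨_, h⟩ | h
        · simp [hpc] at h
        · simp [hpc] at h
        · simp [hpc] at h
        · exact Or.inl (before_7 (Function.update_self _ _ _))
    · intro j hpj
      refine ⟨fun s' k h _ => ?_, fun s' k h _ => ?_, fun s' k h _ => ?_, fun s' h => ?_⟩ <;>
        simp [Function.update_self] at h
  | exit2 =>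
    simp only [glbStep, hpc] at hstep
    simp only [okP, hpc] at hokp
    obtain ⟨htk, hch⟩ := hokp
    subst hstep
    refine glbInv_of (st := st) (p := p) ?_ hok hpair ?_ ?_ ?_
    · intro q hqp
      refine ⟨?_, ?_, ?_, ?_⟩ <;> simp [Function.update_apply, hqp]
    · simp [okP, Function.update_self, htk, hch]
    · intro i hip si
      have hb : before (⟨Function.update st.session p 0, st.token, st.choosing,
          Function.update st.pc p GLBPc.remainder⟩ : GLBState N) i si p :=
        before_1 (Function.update_self _ _ _)
      exact ⟨fun _ => hb, fun _ => Or.inl hb⟩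
    · intro j hpj
      refine ⟨fun s' k h _ => ?_, fun s' k h _ => ?_, fun s' k h _ => ?_, fun s' h => ?_⟩ <;>
        simp [Function.update_self] at h

end GLBStep
section GLBFinal
variable {N : ℕ}

lemma glbInv_reach (e : GLBExec N) (n : ℕ) : glbInv (e.state n) := by
  induction n with
  | zero => rw [e.init]; exact glbInv_init
  | succ n ih => exact glbInv_step ih (e.step n)

end GLBFinal
/-- **Mutual exclusion for the GLB algorithm.**  In every reachable state of every
execution, no two processes requesting different sessions are simultaneously in the
critical section. -/
theorem glb_mutual_exclusion {N : ℕ} (e : GLBExec N) (n : ℕ) (i j : Fin N) (si sj : ℕ)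
    (hi : (e.state n).pc i = GLBPc.cs si) (hj : (e.state n).pc j = GLBPc.cs sj)
    (hs : si ≠ sj) : False := by
  obtain ⟨hok, hpair⟩ := glbInv_reach e n
  by_cases hij : i = j
  · subst hij
    rw [hi] at hj
    injection hj with e1
    exact hs e1
  · have hbi := (hpair i j hij).2.2.2 si hi
    have hbj := (hpair j i (Ne.symm hij)).2.2.2 sj hj
    have hoki := hok i
    simp only [okP, hi] at hoki
    have hokj := hok j
    simp only [okP, hj] at hokj
    obtain ⟨hsi, hsesi, -, -⟩ := hoki
    obtain ⟨hsj', hsesj, -, -⟩ := hokj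
    have hlex1 : lexLt (e.state n) i j := by
      rcases hbi with h | h | ⟨s', h⟩ | ⟨s', k', m', h, -⟩ | ⟨s', m', h, -⟩ | ⟨hl, -⟩ | h
      · rw [hsesj] at h; omega
      · exact absurd (hsesj.symm.trans h) (Ne.symm hs)
      · simp [hj] at h
      · simp [hj] at h
      · simp [hj] at h
      · exact hl
      · simp [hj] at h
    have hlex2 : lexLt (e.state n) j i := by
      rcases hbj with h | h | ⟨s', h⟩ | ⟨s', k', m', h, -⟩ | ⟨s', m', h, -⟩ | ⟨hl, -⟩ | h
      · rw [hsesi] at h; omega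
      · exact absurd (hsesi.symm.trans h) hs
      · simp [hi] at h
      · simp [hi] at h
      · simp [hi] at h
      · exact hl
      · simp [hi] at h
    rcases hlex1 with h1 | ⟨h1, h1'⟩ <;> rcases hlex2 with h2 | ⟨h2, h2'⟩ <;> omega
end

section
/- The Generalized Lamport's Bakery (GLB) algorithm satisfies the Starvation Freedom property: in every execution in which no process stays in the critical section forever, every process that enters the entry section eventually enters the critical section. -/
section Dev
variable {N : ℕ}

lemma glb_frame {st st' : GLBState N} {i : Fin N} (h : glbStep st i st')
    (j : Fin N) (hj : j ≠ i) :
    st'.pc j = st.pc j ∧ st'.session j = st.session j ∧ st'.token j = st.token j ∧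
      st'.choosing j = st.choosing j := by
  unfold glbStep at h
  split at h <;>
    [ (rcases h with rfl | ⟨s, _, rfl⟩);
      subst h; subst h; (split at h <;> subst h); subst h; subst h;
      (split at h <;> [ (split at h <;> [subst h; subst h]); subst h]);
      (split at h <;> [ (split at h <;> [subst h; subst h]); subst h]);
      (rcases h with rfl | rfl); subst h; subst h ] <;>
  simp [Function.update_of_ne hj]

/-- Per-process state invariant. -/
def InvP (st : GLBState N) (q : Fin N) : Prop :=
  match st.pc q with
  | .remainder => st.token q = 0 ∧ st.session q = 0 ∧ st.choosing q = false
  | .setChoosing s => st.token q = 0 ∧ st.session q = 0 ∧ st.choosing q = false ∧ s ≠ 0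
  | .setSession s => st.token q = 0 ∧ st.session q = 0 ∧ st.choosing q = true ∧ s ≠ 0
  | .scan s _ _ => st.token q = 0 ∧ st.session q = s ∧ st.choosing q = true ∧ s ≠ 0
  | .setToken s _ => st.token q = 0 ∧ st.session q = s ∧ st.choosing q = true ∧ s ≠ 0
  | .unsetChoosing s => st.token q ≠ 0 ∧ st.session q = s ∧ st.choosing q = true ∧ s ≠ 0
  | .wait1 s j => st.token q ≠ 0 ∧ st.session q = s ∧ st.choosing q = false ∧ s ≠ 0 ∧ j ≤ N
  | .wait2 s j => st.token q ≠ 0 ∧ st.session q = s ∧ st.choosing q = false ∧ s ≠ 0 ∧ j < N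
  | .cs s => st.token q ≠ 0 ∧ st.session q = s ∧ st.choosing q = false ∧ s ≠ 0
  | .exit1 => st.token q ≠ 0 ∧ st.choosing q = false
  | .exit2 => st.token q = 0 ∧ st.choosing q = false

lemma inv_step {st st' : GLBState N} {i : Fin N} (h : glbStep st i st')
    (hinv : ∀ q, InvP st q) : ∀ q, InvP st' q := by
  intro q
  by_cases hq : q = i
  · subst hq
    unfold glbStep at h
    split at h <;> rename_i hpc <;>
      [ (rcases h with rfl | ⟨s, hs, rfl⟩);
        subst h; subst h; (split at h <;> subst h); subst h; subst h;
        (split at h <;> [ (split at h <;> [subst h; subst h]); subst h]);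
        (split at h <;> [ (split at h <;> [subst h; subst h]); subst h]);
        (rcases h with rfl | rfl); subst h; subst h ]
    all_goals try exact hinv q
    all_goals
      (have h2 := hinv q; unfold InvP at h2; rw [hpc] at h2;
       unfold InvP; simp only [Function.update_self]; simp_all; try omega)
  · have hfr := glb_frame h q hq
    have h2 := hinv q
    unfold InvP at h2 ⊢
    rw [hfr.1, hfr.2.1, hfr.2.2.1, hfr.2.2.2]
    exact h2

lemma glb_inv (e : GLBExec N) : ∀ m q, InvP (e.state m) q := by
  intro m
  induction m with
  | zero => intro q; rw [e.init]; simp [InvP, glbInit]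
  | succ m ih => exact inv_step (e.step m) ih

end Dev
section Dev2
variable {N : ℕ}

lemma glb_const (e : GLBExec N) (i : Fin N) (a : ℕ) :
    ∀ b, a ≤ b → (∀ k, a ≤ k → k < b → e.sched k ≠ i) →
      (e.state b).pc i = (e.state a).pc i ∧ (e.state b).session i = (e.state a).session i ∧
      (e.state b).token i = (e.state a).token i ∧
      (e.state b).choosing i = (e.state a).choosing i := by
  intro b
  induction b with
  | zero => intro hab _; have : a = 0 := Nat.le_zero.mp hab; subst this; exact ⟨rfl, rfl, rfl, rfl⟩
  | succ b ih =>
    intro hab hk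
    rcases Nat.lt_or_ge a (b + 1) with hlt | hge
    · have hab' : a ≤ b := Nat.lt_succ_iff.mp hlt
      have h1 := ih hab' (fun k h1 h2 => hk k h1 (Nat.lt_succ_of_lt h2))
      have h2 := glb_frame (e.step b) i (fun hc => hk b hab' (Nat.lt_succ_self b) hc.symm)
      exact ⟨h2.1.trans h1.1, h2.2.1.trans h1.2.1, h2.2.2.1.trans h1.2.2.1,
        h2.2.2.2.trans h1.2.2.2⟩
    · have : a = b + 1 := Nat.le_antisymm hab hge
      subst this; exact ⟨rfl, rfl, rfl, rfl⟩

/-- Fairness: a process outside the remainder eventually takes a step, and its own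
components are unchanged until then. -/
lemma own_step (e : GLBExec N) (i : Fin N) (n : ℕ)
    (h : (e.state n).pc i ≠ GLBPc.remainder) :
    ∃ m, n ≤ m ∧ e.sched m = i ∧
      (∀ k, n ≤ k → k ≤ m → (e.state k).pc i = (e.state n).pc i ∧
        (e.state k).session i = (e.state n).session i ∧
        (e.state k).token i = (e.state n).token i ∧
        (e.state k).choosing i = (e.state n).choosing i) := by
  obtain ⟨m0, hm0, hs0⟩ := e.fair i n h
  have hex : ∃ d, e.sched (n + d) = i := ⟨m0 - n, by rwa [Nat.add_sub_cancel' hm0]⟩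
  classical
  let d0 := Nat.find hex
  refine ⟨n + d0, Nat.le_add_right _ _, Nat.find_spec hex, ?_⟩
  intro k hk1 hk2
  refine glb_const e i n k hk1 (fun k' h1 h2 => ?_)
  intro hc
  have : k' - n < d0 := by
    have := Nat.lt_of_lt_of_le h2 hk2; omega
  exact Nat.find_min hex this (by rwa [Nat.add_sub_cancel' h1])

end Dev2
section Dev3
variable {N : ℕ}

lemma prog_setToken (e : GLBExec N) (q : Fin N) (n : ℕ) (s mm : ℕ)
    (hpc : (e.state n).pc q = .setToken s mm) :
    ∃ m, n ≤ m ∧ (e.state m).pc q = .unsetChoosing s := by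
  obtain ⟨m, hnm, hsch, hconst⟩ := own_step e q n (by rw [hpc]; simp)
  have hpcm : (e.state m).pc q = .setToken s mm := by rw [(hconst m hnm le_rfl).1, hpc]
  have h := e.step m
  unfold glbStep at h
  rw [hsch] at h
  simp only [hpcm] at h
  refine ⟨m + 1, by omega, ?_⟩
  rw [h]; simp [Function.update_self]

lemma prog_scan (e : GLBExec N) (q : Fin N) :
    ∀ c n s j mm, N - j ≤ c → (e.state n).pc q = .scan s j mm →
      ∃ m, n ≤ m ∧ (e.state m).pc q = .unsetChoosing s := by
  intro c
  induction c with
  | zero =>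
    intro n s j mm hc hpc
    obtain ⟨m, hnm, hsch, hconst⟩ := own_step e q n (by rw [hpc]; simp)
    have hpcm : (e.state m).pc q = .scan s j mm := by rw [(hconst m hnm le_rfl).1, hpc]
    have h := e.step m
    unfold glbStep at h
    rw [hsch] at h
    simp only [hpcm] at h
    rw [dif_neg (by omega : ¬ j < N)] at h
    obtain ⟨m', hm', hpc'⟩ := prog_setToken e q (m + 1) s mm
      (by rw [h]; simp [Function.update_self])
    exact ⟨m', by omega, hpc'⟩
  | succ c ih =>
    intro n s j mm hc hpc
    obtain ⟨m, hnm, hsch, hconst⟩ := own_step e q n (by rw [hpc]; simp)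
    have hpcm : (e.state m).pc q = .scan s j mm := by rw [(hconst m hnm le_rfl).1, hpc]
    have h := e.step m
    unfold glbStep at h
    rw [hsch] at h
    simp only [hpcm] at h
    by_cases hj : j < N
    · rw [dif_pos hj] at h
      obtain ⟨m', hm', hpc'⟩ := ih (m + 1) s (j + 1)
        (if (⟨j, hj⟩ : Fin N) = q then mm else mm ⊔ (e.state m).token ⟨j, hj⟩) (by omega)
        (by rw [h]; simp [Function.update_self])
      exact ⟨m', by omega, hpc'⟩
    · rw [dif_neg hj] at h
      obtain ⟨m', hm', hpc'⟩ := prog_setToken e q (m + 1) s mm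
        (by rw [h]; simp [Function.update_self])
      exact ⟨m', by omega, hpc'⟩

lemma prog_unsetChoosing (e : GLBExec N) (q : Fin N) (n : ℕ) (s : ℕ)
    (hpc : (e.state n).pc q = .unsetChoosing s) :
    ∃ m, n ≤ m ∧ (e.state m).pc q = .wait1 s 0 := by
  obtain ⟨m, hnm, hsch, hconst⟩ := own_step e q n (by rw [hpc]; simp)
  have hpcm : (e.state m).pc q = .unsetChoosing s := by rw [(hconst m hnm le_rfl).1, hpc]
  have h := e.step m
  unfold glbStep at h
  rw [hsch] at h
  simp only [hpcm] at h
  exact ⟨m + 1, by omega, by rw [h]; simp [Function.update_self]⟩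

lemma prog_setSession (e : GLBExec N) (q : Fin N) (n : ℕ) (s : ℕ)
    (hpc : (e.state n).pc q = .setSession s) :
    ∃ m, n ≤ m ∧ (e.state m).pc q = .scan s 0 0 := by
  obtain ⟨m, hnm, hsch, hconst⟩ := own_step e q n (by rw [hpc]; simp)
  have hpcm : (e.state m).pc q = .setSession s := by rw [(hconst m hnm le_rfl).1, hpc]
  have h := e.step m
  unfold glbStep at h
  rw [hsch] at h
  simp only [hpcm] at h
  exact ⟨m + 1, by omega, by rw [h]; simp [Function.update_self]⟩

lemma prog_setChoosing (e : GLBExec N) (q : Fin N) (n : ℕ) (s : ℕ)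
    (hpc : (e.state n).pc q = .setChoosing s) :
    ∃ m, n ≤ m ∧ (e.state m).pc q = .setSession s := by
  obtain ⟨m, hnm, hsch, hconst⟩ := own_step e q n (by rw [hpc]; simp)
  have hpcm : (e.state m).pc q = .setChoosing s := by rw [(hconst m hnm le_rfl).1, hpc]
  have h := e.step m
  unfold glbStep at h
  rw [hsch] at h
  simp only [hpcm] at h
  exact ⟨m + 1, by omega, by rw [h]; simp [Function.update_self]⟩

/-- From anywhere in the doorway, reach `wait1 s 0`. -/
lemma prog_toWait1 (e : GLBExec N) (q : Fin N) (n : ℕ) (s : ℕ)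
    (hpc : (e.state n).pc q = .setChoosing s ∨ (e.state n).pc q = .setSession s ∨
      (∃ j mm, (e.state n).pc q = .scan s j mm) ∨ (∃ mm, (e.state n).pc q = .setToken s mm) ∨
      (e.state n).pc q = .unsetChoosing s) :
    ∃ m, n ≤ m ∧ (e.state m).pc q = .wait1 s 0 := by
  have huc : ∀ m, n ≤ m → (e.state m).pc q = .unsetChoosing s →
      ∃ m', n ≤ m' ∧ (e.state m').pc q = .wait1 s 0 := by
    intro m hm hpc'
    obtain ⟨m', hm', hpc''⟩ := prog_unsetChoosing e q m s hpc'
    exact ⟨m', le_trans hm hm', hpc''⟩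
  have hsc : ∀ m j mm, n ≤ m → (e.state m).pc q = .scan s j mm →
      ∃ m', n ≤ m' ∧ (e.state m').pc q = .wait1 s 0 := by
    intro m j mm hm hpc'
    obtain ⟨m', hm', hpc''⟩ := prog_scan e q (N - j) m s j mm le_rfl hpc'
    exact huc m' (le_trans hm hm') hpc''
  rcases hpc with h1 | h1 | ⟨j, mm, h1⟩ | ⟨mm, h1⟩ | h1
  · obtain ⟨m, hm, h2⟩ := prog_setChoosing e q n s h1
    obtain ⟨m', hm', h3⟩ := prog_setSession e q m s h2
    exact hsc m' 0 0 (le_trans hm hm') h3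
  · obtain ⟨m', hm', h3⟩ := prog_setSession e q n s h1
    exact hsc m' 0 0 hm' h3
  · exact hsc n j mm le_rfl h1
  · obtain ⟨m, hm, h2⟩ := prog_setToken e q n s mm h1
    exact huc m hm h2
  · exact huc n le_rfl h1

end Dev3
section Dev4
variable {N : ℕ}

/-- Lexicographic order on (token, id) pairs. -/
def GLt (a : ℕ) (u : Fin N) (b : ℕ) (v : Fin N) : Prop :=
  a < b ∨ (a = b ∧ u.val < v.val)

lemma GLt_asymm {a b : ℕ} {u v : Fin N} (h : GLt a u b v) : ¬ GLt b v a u := by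
  unfold GLt at h ⊢; omega

lemma GLt_trans {a b c : ℕ} {u v w : Fin N} (h1 : GLt a u b v) (h2 : GLt b v c w) :
    GLt a u c w := by
  unfold GLt at h1 h2 ⊢; omega

lemma GLt_enc {a b : ℕ} {u v : Fin N} (h : GLt a u b v) : a * N + u.val < b * N + v.val := by
  rcases h with h | ⟨rfl, h⟩
  · calc a * N + u.val < a * N + N := Nat.add_lt_add_left u.isLt _
      _ = (a + 1) * N := by ring
      _ ≤ b * N := Nat.mul_le_mul_right N h
      _ ≤ b * N + v.val := Nat.le_add_right _ _
  · exact Nat.add_lt_add_left h _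

/-- `q` is a "potential overtaker" of `p` (whose token is `t`): it either holds a
nonzero token lexicographically smaller than `(t, p)`, or it is in the doorway past
the scan of `p`'s token with a running maximum below `t`. -/
def potP (t : ℕ) (p : Fin N) (st : GLBState N) (q : Fin N) : Prop :=
  q ≠ p ∧
    ((st.token q ≠ 0 ∧ GLt (st.token q) q t p) ∨
     (∃ s j mm, st.pc q = .scan s j mm ∧ p.val < j ∧ mm < t) ∨
     (∃ s mm, st.pc q = .setToken s mm ∧ mm < t))

lemma pot_step {st st' : GLBState N} {r : Fin N} (h : glbStep st r st')
    {t : ℕ} {p : Fin N} (hp : st.token p = t) {q : Fin N} (hq : potP t p st' q) :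
    potP t p st q := by
  obtain ⟨hqp, hcase⟩ := hq
  by_cases hr : q = r
  · subst hr
    refine ⟨hqp, ?_⟩
    unfold glbStep at h
    split at h <;> rename_i hpc <;>
      [ (rcases h with rfl | ⟨s, hs, rfl⟩);
        subst h; subst h; (split at h <;> subst h); subst h; subst h;
        (split at h <;> [ (split at h <;> [subst h; subst h]); subst h]);
        (split at h <;> [ (split at h <;> [subst h; subst h]); subst h]);
        (rcases h with rfl | rfl); subst h; subst h ]
    all_goals try exact hcase
    -- remaining: remainder→setChoosing, setChoosing, setSession, scan(T), scan(F),
    -- setToken, unsetChoosing, wait1(TT), wait1(F), wait2(TT), cs→exit1, exit1, exit2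
    case _ => -- remainder → setChoosing
      rcases hcase with ⟨h1, h2⟩ | ⟨s', j', mm', hpc', hj', hm'⟩ | ⟨s', mm', hpc', hm'⟩
      · exact Or.inl ⟨by simpa using h1, by simpa using h2⟩
      · simp [Function.update_self] at hpc'
      · simp [Function.update_self] at hpc'
    case _ => -- setChoosing → setSession
      rcases hcase with ⟨h1, h2⟩ | ⟨s', j', mm', hpc', hj', hm'⟩ | ⟨s', mm', hpc', hm'⟩
      · exact Or.inl ⟨by simpa using h1, by simpa using h2⟩
      · simp [Function.update_self] at hpc'
      · simp [Function.update_self] at hpc'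
    case _ => -- setSession → scan s 0 0
      rcases hcase with ⟨h1, h2⟩ | ⟨s', j', mm', hpc', hj', hm'⟩ | ⟨s', mm', hpc', hm'⟩
      · exact Or.inl ⟨by simpa using h1, by simpa using h2⟩
      · simp [Function.update_self] at hpc'; omega
      · simp [Function.update_self] at hpc'
    case _ => -- scan, j < N
      rename_i s j mm hj
      rcases hcase with ⟨h1, h2⟩ | ⟨s', j', mm', hpc', hj', hm'⟩ | ⟨s', mm', hpc', hm'⟩
      · exact Or.inl ⟨by simpa using h1, by simpa using h2⟩
      · have hpc'' : GLBPc.scan s (j + 1)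
            (if (⟨j, hj⟩ : Fin N) = q then mm else mm ⊔ st.token ⟨j, hj⟩)
            = GLBPc.scan s' j' mm' :=
          (Function.update_self q _ st.pc).symm.trans hpc'
        obtain ⟨hs', hj'', hm''⟩ := GLBPc.scan.inj hpc''
        subst hs'
        subst hj''
        subst hm''
        rcases Nat.lt_trichotomy p.val j with hpj | hpj | hpj
        · refine Or.inr (Or.inl ⟨s, j, mm, hpc, hpj, ?_⟩)
          have hle : mm ≤ (if (⟨j, hj⟩ : Fin N) = q then mm else mm ⊔ st.token ⟨j, hj⟩) := by
            split <;> [exact le_rfl; exact le_max_left _ _]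
          omega
        · exfalso
          have hjp : (⟨j, hj⟩ : Fin N) = p := Fin.ext hpj.symm
          have hne : (⟨j, hj⟩ : Fin N) ≠ q := by rw [hjp]; exact fun hc => hqp hc.symm
          rw [if_neg hne, hjp, hp] at hm'
          have : t ≤ mm ⊔ t := le_max_right _ _
          omega
        · omega
      · simp [Function.update_self] at hpc'
    case _ => -- scan, ¬ j < N
      rename_i s j mm hj
      rcases hcase with ⟨h1, h2⟩ | ⟨s', j', mm', hpc', hj', hm'⟩ | ⟨s', mm', hpc', hm'⟩
      · exact Or.inl ⟨by simpa using h1, by simpa using h2⟩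
      · simp [Function.update_self] at hpc'
      · have hpc'' : GLBPc.setToken s mm = GLBPc.setToken s' mm' :=
          (Function.update_self q _ st.pc).symm.trans hpc'
        obtain ⟨hs', hm''⟩ := GLBPc.setToken.inj hpc''
        refine Or.inr (Or.inl ⟨s, j, mm, hpc, ?_, ?_⟩)
        · have := p.isLt; omega
        · omega
    case _ => -- setToken → unsetChoosing
      rename_i s mm
      rcases hcase with ⟨h1, h2⟩ | ⟨s', j', mm', hpc', hj', hm'⟩ | ⟨s', mm', hpc', hm'⟩
      · have h2' : GLt (mm + 1) q t p := by
          have : Function.update st.token q (mm + 1) q = mm + 1 :=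
            Function.update_self _ _ _
          exact this ▸ h2
        refine Or.inr (Or.inr ⟨s, mm, hpc, ?_⟩)
        rcases h2' with h2' | ⟨h2', _⟩ <;> omega
      · simp [Function.update_self] at hpc'
      · simp [Function.update_self] at hpc'
    case _ => -- unsetChoosing → wait1
      rcases hcase with ⟨h1, h2⟩ | ⟨s', j', mm', hpc', hj', hm'⟩ | ⟨s', mm', hpc', hm'⟩
      · exact Or.inl ⟨by simpa using h1, by simpa using h2⟩
      · simp [Function.update_self] at hpc'
      · simp [Function.update_self] at hpc'
    case _ => -- wait1 → wait2
      rcases hcase with ⟨h1, h2⟩ | ⟨s', j', mm', hpc', hj', hm'⟩ | ⟨s', mm', hpc', hm'⟩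
      · exact Or.inl ⟨by simpa using h1, by simpa using h2⟩
      · simp [Function.update_self] at hpc'
      · simp [Function.update_self] at hpc'
    case _ => -- wait1 → cs
      rcases hcase with ⟨h1, h2⟩ | ⟨s', j', mm', hpc', hj', hm'⟩ | ⟨s', mm', hpc', hm'⟩
      · exact Or.inl ⟨by simpa using h1, by simpa using h2⟩
      · simp [Function.update_self] at hpc'
      · simp [Function.update_self] at hpc'
    case _ => -- wait2 → wait1
      rcases hcase with ⟨h1, h2⟩ | ⟨s', j', mm', hpc', hj', hm'⟩ | ⟨s', mm', hpc', hm'⟩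
      · exact Or.inl ⟨by simpa using h1, by simpa using h2⟩
      · simp [Function.update_self] at hpc'
      · simp [Function.update_self] at hpc'
    case _ => -- cs → exit1
      rcases hcase with ⟨h1, h2⟩ | ⟨s', j', mm', hpc', hj', hm'⟩ | ⟨s', mm', hpc', hm'⟩
      · exact Or.inl ⟨by simpa using h1, by simpa using h2⟩
      · simp [Function.update_self] at hpc'
      · simp [Function.update_self] at hpc'
    case _ => -- exit1 → exit2
      rcases hcase with ⟨h1, h2⟩ | ⟨s', j', mm', hpc', hj', hm'⟩ | ⟨s', mm', hpc', hm'⟩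
      · exfalso; apply h1; simp [Function.update_self]
      · simp [Function.update_self] at hpc'
      · simp [Function.update_self] at hpc'
    case _ => -- exit2 → remainder
      rcases hcase with ⟨h1, h2⟩ | ⟨s', j', mm', hpc', hj', hm'⟩ | ⟨s', mm', hpc', hm'⟩
      · exact Or.inl ⟨by simpa using h1, by simpa using h2⟩
      · simp [Function.update_self] at hpc'
      · simp [Function.update_self] at hpc'
  · have hfr := glb_frame h q hr
    rw [hfr.2.2.1, hfr.1] at hcase
    exact ⟨hqp, hcase⟩

end Dev4
section Dev5
variable {N : ℕ}

lemma step_token_eq {st st' : GLBState N} {r : Fin N} (h : glbStep st r st') (p : Fin N)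
    (h1 : ∀ s mm, st.pc r ≠ .setToken s mm) (h2 : st.pc r ≠ .exit1) :
    st'.token p = st.token p := by
  unfold glbStep at h
  split at h <;> rename_i hpc <;>
    [ (rcases h with rfl | ⟨s, _, rfl⟩);
      subst h; subst h; (split at h <;> subst h); subst h; subst h;
      (split at h <;> [ (split at h <;> [subst h; subst h]); subst h]);
      (split at h <;> [ (split at h <;> [subst h; subst h]); subst h]);
      (rcases h with rfl | rfl); subst h; subst h ]
  all_goals first
    | rfl
    | (exact absurd hpc (h1 _ _))
    | (exact absurd hpc h2)

lemma wait_persist (e : GLBExec N) (p : Fin N) (s a : ℕ)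
    (hpc0 : ∃ j, (e.state a).pc p = .wait1 s j ∨ (e.state a).pc p = .wait2 s j)
    (hnc : ∀ m, a ≤ m → ∀ s', (e.state m).pc p ≠ GLBPc.cs s') :
    ∀ m, a ≤ m → ∃ j, (e.state m).pc p = .wait1 s j ∨ (e.state m).pc p = .wait2 s j := by
  intro m
  induction m with
  | zero => intro h; have : a = 0 := Nat.le_zero.mp h; subst this; exact hpc0
  | succ m ih =>
    intro ham
    rcases Nat.lt_or_ge a (m + 1) with hlt | hge
    · have ham' : a ≤ m := Nat.lt_succ_iff.mp hlt
      obtain ⟨j, hj⟩ := ih ham'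
      by_cases hsch : e.sched m = p
      · have h := e.step m
        unfold glbStep at h
        rw [hsch] at h
        rcases hj with hj | hj
        · simp only [hj] at h
          by_cases hjN : j < N
          · rw [dif_pos hjN] at h
            split at h
            · exact ⟨j, Or.inr (by rw [h]; simp [Function.update_self])⟩
            · exact ⟨j, Or.inl (by rw [h, hj])⟩
          · exfalso
            rw [dif_neg hjN] at h
            exact hnc (m + 1) (by omega) s (by rw [h]; simp [Function.update_self])
        · simp only [hj] at h
          by_cases hjN : j < N
          · rw [dif_pos hjN] at h
            split at h
            · exact ⟨j + 1, Or.inl (by rw [h]; simp [Function.update_self])⟩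
            · exact ⟨j, Or.inr (by rw [h, hj])⟩
          · rw [dif_neg hjN] at h
            exact ⟨j, Or.inr (by rw [h, hj])⟩
      · have hfr := glb_frame (e.step m) p (fun hc => hsch hc.symm)
        exact ⟨j, by rw [hfr.1]; exact hj⟩
    · have : a = m + 1 := Nat.le_antisymm ham hge
      subst this; exact hpc0

lemma wait_token_const (e : GLBExec N) (p : Fin N) (s a : ℕ)
    (hW : ∀ m, a ≤ m → ∃ j, (e.state m).pc p = .wait1 s j ∨ (e.state m).pc p = .wait2 s j) :
    ∀ m, a ≤ m → (e.state m).token p = (e.state a).token p := by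
  intro m
  induction m with
  | zero => intro h; have : a = 0 := Nat.le_zero.mp h; subst this; rfl
  | succ m ih =>
    intro ham
    rcases Nat.lt_or_ge a (m + 1) with hlt | hge
    · have ham' : a ≤ m := Nat.lt_succ_iff.mp hlt
      rw [← ih ham']
      by_cases hsch : e.sched m = p
      · obtain ⟨j, hj⟩ := hW m ham'
        refine step_token_eq (e.step m) p ?_ ?_ <;> rw [hsch] <;>
          rcases hj with hj | hj <;> rw [hj] <;> simp
      · exact (glb_frame (e.step m) p (fun hc => hsch hc.symm)).2.2.1
    · have : a = m + 1 := Nat.le_antisymm ham hge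
      subst this; rfl

/-- A process in the CS eventually reaches `exit2` with token `0`. -/
lemma cs_exit (e : GLBExec N)
    (hncs : ∀ (i : Fin N) (n : ℕ), glbInCS (e.state n) i →
      ∃ m, n ≤ m ∧ ¬ glbInCS (e.state m) i)
    (q : Fin N) (mc s0 : ℕ) (hpc : (e.state mc).pc q = .cs s0) :
    ∃ m, mc ≤ m ∧ (e.state m).pc q = GLBPc.exit2 ∧ (e.state m).token q = 0 := by
  obtain ⟨mx, hmx, hnot⟩ := hncs q mc ⟨s0, hpc⟩
  classical
  have hex : ∃ d, (e.state (mc + d)).pc q ≠ GLBPc.cs s0 := by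
    refine ⟨mx - mc, ?_⟩
    rw [Nat.add_sub_cancel' hmx]
    exact fun hc => hnot ⟨s0, hc⟩
  let d0 := Nat.find hex
  have hd0 : (e.state (mc + d0)).pc q ≠ GLBPc.cs s0 := Nat.find_spec hex
  have hd0pos : 0 < d0 := by
    rcases Nat.eq_zero_or_pos d0 with h | h
    · exfalso; apply hd0; rw [h]; exact hpc
    · exact h
  have hprev : (e.state (mc + (d0 - 1))).pc q = GLBPc.cs s0 := by
    by_contra hc
    exact absurd (Nat.find_min hex (by omega : d0 - 1 < d0)) (fun h => h hc)
  have heq : mc + (d0 - 1) + 1 = mc + d0 := by omega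
  have hsch : e.sched (mc + (d0 - 1)) = q := by
    by_contra hc
    apply hd0
    have hfr := glb_frame (e.step (mc + (d0 - 1))) q (fun h => hc h.symm)
    rw [← heq, hfr.1, hprev]
  have h := e.step (mc + (d0 - 1))
  unfold glbStep at h
  rw [hsch] at h
  simp only [hprev] at h
  rcases h with h | h
  · exfalso; apply hd0; rw [← heq, h, hprev]
  · have hpc1 : (e.state (mc + d0)).pc q = GLBPc.exit1 := by
      rw [← heq, h]; simp [Function.update_self]
    obtain ⟨m, hm, hsch2, hconst⟩ := own_step e q (mc + d0) (by rw [hpc1]; simp)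
    have hpcm : (e.state m).pc q = GLBPc.exit1 := by rw [(hconst m hm le_rfl).1, hpc1]
    have h2 := e.step m
    unfold glbStep at h2
    rw [hsch2] at h2
    simp only [hpcm] at h2
    refine ⟨m + 1, by omega, ?_, ?_⟩
    · rw [h2]; simp [Function.update_self]
    · rw [h2]; simp [Function.update_self]

end Dev5
section Dev6
variable {N : ℕ}

lemma invp_wait1 (e : GLBExec N) (m : ℕ) (p : Fin N) {s j : ℕ}
    (h : (e.state m).pc p = .wait1 s j) :
    (e.state m).token p ≠ 0 ∧ (e.state m).session p = s ∧ (e.state m).choosing p = false ∧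
      s ≠ 0 ∧ j ≤ N := by
  have hi := glb_inv e m p; unfold InvP at hi; rw [h] at hi; exact hi

lemma invp_wait2 (e : GLBExec N) (m : ℕ) (p : Fin N) {s j : ℕ}
    (h : (e.state m).pc p = .wait2 s j) :
    (e.state m).token p ≠ 0 ∧ (e.state m).session p = s ∧ (e.state m).choosing p = false ∧
      s ≠ 0 ∧ j < N := by
  have hi := glb_inv e m p; unfold InvP at hi; rw [h] at hi; exact hi

lemma invp_unset (e : GLBExec N) (m : ℕ) (p : Fin N) {s : ℕ}
    (h : (e.state m).pc p = .unsetChoosing s) :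
    (e.state m).token p ≠ 0 ∧ (e.state m).session p = s ∧ (e.state m).choosing p = true ∧
      s ≠ 0 := by
  have hi := glb_inv e m p; unfold InvP at hi; rw [h] at hi; exact hi

/-- If a process has `choosing = true` and a nonzero session, it is in the doorway
past `setSession`. -/
lemma choosing_cases (e : GLBExec N) (m : ℕ) (r : Fin N)
    (hch : (e.state m).choosing r = true) (hs : (e.state m).session r ≠ 0) :
    (∃ j mm, (e.state m).pc r = .scan ((e.state m).session r) j mm) ∨
    (∃ mm, (e.state m).pc r = .setToken ((e.state m).session r) mm) ∨
    (e.state m).pc r = .unsetChoosing ((e.state m).session r) := by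
  have hi := glb_inv e m r; unfold InvP at hi
  rcases hpc : (e.state m).pc r with _|s|s|⟨s,j,mm⟩|⟨s,mm⟩|s|⟨s,j⟩|⟨s,j⟩|s|_|_ <;> rw [hpc] at hi
  · rw [hi.2.2] at hch; simp at hch
  · rw [hi.2.2.1] at hch; simp at hch
  · exact absurd hi.2.1 hs
  · exact Or.inl ⟨j, mm, by rw [hi.2.1]⟩
  · exact Or.inr (Or.inl ⟨mm, by rw [hi.2.1]⟩)
  · exact Or.inr (Or.inr (by rw [hi.2.1]))
  · rw [hi.2.2.1] at hch; simp at hch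
  · rw [hi.2.2.1] at hch; simp at hch
  · rw [hi.2.2.1] at hch; simp at hch
  · rw [hi.2] at hch; simp at hch
  · rw [hi.2] at hch; simp at hch

/-- `r` blocks the first wait-check of a process with session `s'`. -/
def blocksW1 (e : GLBExec N) (m : ℕ) (r : Fin N) (s' : ℕ) : Prop :=
  (e.state m).choosing r = true ∧ (e.state m).session r ≠ 0 ∧ (e.state m).session r ≠ s'

/-- A conflicting process entering the waiting room after `p'` can never get past
the index of `p'` as long as `p'` waits with a lexicographically smaller token. -/
lemma stuck (e : GLBExec N) (p' : Fin N) (s' t' : ℕ) (a : ℕ)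
    (hW : ∀ m, a ≤ m → ∃ j, (e.state m).pc p' = .wait1 s' j ∨ (e.state m).pc p' = .wait2 s' j)
    (ht' : ∀ m, a ≤ m → (e.state m).token p' = t') (ht0 : t' ≠ 0) (hs0 : s' ≠ 0)
    (HK : ∀ m, a ≤ m → ∀ r : Fin N, r ≠ p' →
      (e.state m).token r = 0 ∨ ¬ GLt ((e.state m).token r) r t' p')
    (r : Fin N) (hr : r ≠ p') (sr : ℕ) (hsr : sr ≠ s')
    (m4 : ℕ) (hm4 : a ≤ m4) (hpcr : (e.state m4).pc r = .wait1 sr 0) :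
    ∀ m, m4 ≤ m → ∃ j, ((e.state m).pc r = .wait1 sr j ∨ (e.state m).pc r = .wait2 sr j) ∧
      j ≤ p'.val := by
  have hsesp : ∀ m, a ≤ m → (e.state m).session p' = s' := by
    intro m hm
    obtain ⟨j, hj | hj⟩ := hW m hm
    · exact (invp_wait1 e m p' hj).2.1
    · exact (invp_wait2 e m p' hj).2.1
  intro m
  induction m with
  | zero =>
    intro h; have : m4 = 0 := Nat.le_zero.mp h; subst this
    exact ⟨0, Or.inl hpcr, Nat.zero_le _⟩
  | succ m ih =>
    intro hm
    rcases Nat.lt_or_ge m4 (m + 1) with hlt | hge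
    · have hm' : m4 ≤ m := Nat.lt_succ_iff.mp hlt
      obtain ⟨j, hj, hjp⟩ := ih hm'
      have hjN : j < N := lt_of_le_of_lt hjp p'.isLt
      by_cases hsch : e.sched m = r
      · have h := e.step m
        unfold glbStep at h
        rw [hsch] at h
        rcases hj with hj | hj
        · simp only [hj] at h
          rw [dif_pos hjN] at h
          split at h
          · exact ⟨j, Or.inr (by rw [h]; simp [Function.update_self]), hjp⟩
          · exact ⟨j, Or.inl (by rw [h, hj]), hjp⟩
        · simp only [hj] at h
          rw [dif_pos hjN] at h
          split at h
          · rename_i hcond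
            -- the check passed: show j ≠ p'.val, hence j < p'.val
            have hjne : j ≠ p'.val := by
              intro heq
              have hjp' : (⟨j, hjN⟩ : Fin N) = p' := Fin.ext heq
              rw [hjp'] at hcond
              rw [ht' m (le_trans hm4 hm'), hsesp m (le_trans hm4 hm')] at hcond
              have htr : (e.state m).token r ≠ 0 := (invp_wait2 e m r hj).1
              rcases HK m (le_trans hm4 hm') r hr with h0 | hngl
              · exact htr h0
              · rcases hcond with (hc | hc) | hc | hc | hc
                · exact hngl (Or.inl hc)
                · exact hngl (Or.inr ⟨hc.1, heq ▸ hc.2⟩)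
                · exact ht0 hc
                · exact hs0 hc
                · exact hsr hc.symm
            exact ⟨j + 1, Or.inl (by rw [h]; simp [Function.update_self]), by omega⟩
          · exact ⟨j, Or.inr (by rw [h, hj]), hjp⟩
      · have hfr := glb_frame (e.step m) r (fun hc => hsch hc.symm)
        rw [← hfr.1] at hj
        exact ⟨j, hj, hjp⟩
    · have : m4 = m + 1 := Nat.le_antisymm hm hge
      subst this
      exact ⟨0, Or.inl hpcr, Nat.zero_le _⟩

end Dev6
section Dev7
variable {N : ℕ}

lemma eventually_unblocked (e : GLBExec N) (p' : Fin N) (s' t' : ℕ) (a : ℕ)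
    (hW : ∀ m, a ≤ m → ∃ j, (e.state m).pc p' = .wait1 s' j ∨ (e.state m).pc p' = .wait2 s' j)
    (ht' : ∀ m, a ≤ m → (e.state m).token p' = t') (ht0 : t' ≠ 0) (hs0 : s' ≠ 0)
    (HK : ∀ m, a ≤ m → ∀ r : Fin N, r ≠ p' →
      (e.state m).token r = 0 ∨ ¬ GLt ((e.state m).token r) r t' p') :
    ∀ r : Fin N, ∃ M, a ≤ M ∧ ∀ m, M ≤ m → ¬ blocksW1 e m r s' := by
  intro r
  by_cases hb : ∃ m, a ≤ m ∧ blocksW1 e m r s'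
  · obtain ⟨m3, hm3, hch, hs, hss⟩ := hb
    have hr : r ≠ p' := by
      intro hc; subst hc
      obtain ⟨j, hj | hj⟩ := hW m3 hm3
      · rw [(invp_wait1 e m3 r hj).2.2.1] at hch; simp at hch
      · rw [(invp_wait2 e m3 r hj).2.2.1] at hch; simp at hch
    -- r is in the doorway with a conflicting session; it reaches wait1 and gets stuck
    obtain ⟨m4, hm4, hpc4⟩ := prog_toWait1 e r m3 ((e.state m3).session r)
      (by rcases choosing_cases e m3 r hch hs with h | h | h
          · exact Or.inr (Or.inr (Or.inl h))
          · exact Or.inr (Or.inr (Or.inr (Or.inl h)))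
          · exact Or.inr (Or.inr (Or.inr (Or.inr h))))
    have hstuck := stuck e p' s' t' a hW ht' ht0 hs0 HK r hr ((e.state m3).session r) hss
      m4 (le_trans hm3 hm4) hpc4
    refine ⟨m4, le_trans hm3 hm4, ?_⟩
    intro m hm hblk
    obtain ⟨hb1, hb2, hb3⟩ := hblk
    obtain ⟨j, hj, _⟩ := hstuck m hm
    rcases hj with hj | hj
    · rw [(invp_wait1 e m r hj).2.2.1] at hb1; simp at hb1
    · rw [(invp_wait2 e m r hj).2.2.1] at hb1; simp at hb1
  · exact ⟨a, le_rfl, fun m hm hc => hb ⟨m, hm, hc⟩⟩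

/-- If all wait-checks of `p'` always pass, `p'` advances to the critical section. -/
lemma adv (e : GLBExec N) (p' : Fin N) (s' t' : ℕ) (a : ℕ)
    (hs0 : s' ≠ 0)
    (HK : ∀ m, a ≤ m → ∀ r : Fin N, r ≠ p' →
      (e.state m).token r = 0 ∨ ¬ GLt ((e.state m).token r) r t' p')
    (Hnb : ∀ (r : Fin N) m, a ≤ m → ¬ blocksW1 e m r s') :
    ∀ c m j, a ≤ m → (e.state m).token p' = t' →
      (((e.state m).pc p' = .wait1 s' j ∧ j ≤ N ∧ 2 * (N - j) + 1 ≤ c) ∨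
       ((e.state m).pc p' = .wait2 s' j ∧ j < N ∧ 2 * (N - j) ≤ c)) →
      ∃ m', m ≤ m' ∧ (e.state m').pc p' = .cs s' := by
  intro c
  induction c with
  | zero =>
    intro m j _ _ hcase
    rcases hcase with ⟨_, _, hc⟩ | ⟨_, hjN, hc⟩ <;> omega
  | succ c ih =>
    intro m j ham htok hcase
    rcases hcase with ⟨hpc, hjN, hc⟩ | ⟨hpc, hjN, hc⟩
    · -- wait1
      obtain ⟨m0, hm0, hsch, hconst⟩ := own_step e p' m (by rw [hpc]; simp)
      have hpcm : (e.state m0).pc p' = .wait1 s' j := by rw [(hconst m0 hm0 le_rfl).1, hpc]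
      have htokm : (e.state m0).token p' = t' := by rw [(hconst m0 hm0 le_rfl).2.2.1, htok]
      have h := e.step m0
      unfold glbStep at h
      rw [hsch] at h
      simp only [hpcm] at h
      by_cases hjN' : j < N
      · rw [dif_pos hjN'] at h
        have hcond : (e.state m0).choosing ⟨j, hjN'⟩ = false ∨
            (e.state m0).session ⟨j, hjN'⟩ = 0 ∨ (e.state m0).session ⟨j, hjN'⟩ = s' := by
          have hnb := Hnb ⟨j, hjN'⟩ m0 (le_trans ham hm0)
          unfold blocksW1 at hnb
          by_cases h1 : (e.state m0).choosing ⟨j, hjN'⟩ = true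
          · by_cases h2 : (e.state m0).session ⟨j, hjN'⟩ = 0
            · exact Or.inr (Or.inl h2)
            · by_cases h3 : (e.state m0).session ⟨j, hjN'⟩ = s'
              · exact Or.inr (Or.inr h3)
              · exact absurd ⟨h1, h2, h3⟩ hnb
          · exact Or.inl (Bool.not_eq_true _ ▸ h1 : _)
        rw [if_pos hcond] at h
        have hpc1 : (e.state (m0 + 1)).pc p' = .wait2 s' j := by
          rw [h]; simp [Function.update_self]
        have htok1 : (e.state (m0 + 1)).token p' = t' := by rw [h]; exact htokm
        obtain ⟨m', hm', hcs⟩ := ih (m0 + 1) j (by omega) htok1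
          (Or.inr ⟨hpc1, hjN', by omega⟩)
        exact ⟨m', by omega, hcs⟩
      · rw [dif_neg hjN'] at h
        exact ⟨m0 + 1, by omega, by rw [h]; simp [Function.update_self]⟩
    · -- wait2
      obtain ⟨m0, hm0, hsch, hconst⟩ := own_step e p' m (by rw [hpc]; simp)
      have hpcm : (e.state m0).pc p' = .wait2 s' j := by rw [(hconst m0 hm0 le_rfl).1, hpc]
      have htokm : (e.state m0).token p' = t' := by rw [(hconst m0 hm0 le_rfl).2.2.1, htok]
      have h := e.step m0
      unfold glbStep at h
      rw [hsch] at h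
      simp only [hpcm] at h
      rw [dif_pos hjN] at h
      have hcond : ((e.state m0).token p' < (e.state m0).token ⟨j, hjN⟩ ∨
          ((e.state m0).token p' = (e.state m0).token ⟨j, hjN⟩ ∧ p'.val < j)) ∨
          (e.state m0).token ⟨j, hjN⟩ = 0 ∨ (e.state m0).session ⟨j, hjN⟩ = 0 ∨
          (e.state m0).session ⟨j, hjN⟩ = s' := by
        by_cases hjp : (⟨j, hjN⟩ : Fin N) = p'
        · rw [hjp]
          exact Or.inr (Or.inr (Or.inr (invp_wait2 e m0 p' hpcm).2.1))
        · rcases HK m0 (le_trans ham hm0) ⟨j, hjN⟩ hjp with h0 | hngl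
          · exact Or.inr (Or.inl h0)
          · unfold GLt at hngl
            push_neg at hngl
            rcases Nat.lt_or_ge t' ((e.state m0).token ⟨j, hjN⟩) with hlt | hge
            · exact Or.inl (Or.inl (by rw [htokm]; exact hlt))
            · have heq : (e.state m0).token ⟨j, hjN⟩ = t' := le_antisymm hge hngl.1
              have hvne : p'.val ≠ j := by
                intro hc; exact hjp (Fin.ext hc.symm)
              have : p'.val ≤ ((⟨j, hjN⟩ : Fin N) : ℕ) := hngl.2 heq
              exact Or.inl (Or.inr ⟨by rw [htokm, heq], by
                simp only [Fin.val_mk] at this; omega⟩)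
      rw [if_pos hcond] at h
      have hpc1 : (e.state (m0 + 1)).pc p' = .wait1 s' (j + 1) := by
        rw [h]; simp [Function.update_self]
      have htok1 : (e.state (m0 + 1)).token p' = t' := by rw [h]; exact htokm
      obtain ⟨m', hm', hcs⟩ := ih (m0 + 1) (j + 1) (by omega) htok1
        (Or.inl ⟨hpc1, by omega, by omega⟩)
      exact ⟨m', by omega, hcs⟩

end Dev7
section Dev8
variable {N : ℕ}

/-- A perpetual potential overtaker eventually sits in the waiting room forever with a
fixed small token. -/
lemma mat (e : GLBExec N)
    (hncs : ∀ (i : Fin N) (n : ℕ), glbInCS (e.state n) i →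
      ∃ m, n ≤ m ∧ ¬ glbInCS (e.state m) i)
    (t : ℕ) (i : Fin N) (m : ℕ) (q : Fin N)
    (hperp : ∀ m', m ≤ m' → potP t i (e.state m') q) :
    ∃ mq sq tq, m ≤ mq ∧ sq ≠ 0 ∧ tq ≠ 0 ∧ GLt tq q t i ∧
      (∀ m', mq ≤ m' → (e.state m').token q = tq) ∧
      (∀ m', mq ≤ m' → ∃ jq, (e.state m').pc q = .wait1 sq jq ∨
        (e.state m').pc q = .wait2 sq jq) := by
  have hnc_cs : ∀ m', m ≤ m' → ∀ s'', (e.state m').pc q ≠ .cs s'' := by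
    intro m' hm' s'' hc
    obtain ⟨mz, hmz, hpcz, htkz⟩ := cs_exit e hncs q m' s'' hc
    obtain ⟨_, hcase⟩ := hperp mz (le_trans hm' hmz)
    rcases hcase with ⟨h1, _⟩ | ⟨s', j', mm', hpc', _, _⟩ | ⟨s', mm', hpc', _⟩
    · exact h1 htkz
    · rw [hpcz] at hpc'; simp at hpc'
    · rw [hpcz] at hpc'; simp at hpc'
  have hnc_e1 : ∀ m', m ≤ m' → (e.state m').pc q ≠ .exit1 := by
    intro m' hm' hc
    obtain ⟨m0, hm0, hsch, hconst⟩ := own_step e q m' (by rw [hc]; simp)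
    have hpcm : (e.state m0).pc q = .exit1 := by rw [(hconst m0 hm0 le_rfl).1, hc]
    have h := e.step m0
    unfold glbStep at h
    rw [hsch] at h
    simp only [hpcm] at h
    obtain ⟨_, hcase⟩ := hperp (m0 + 1) (by omega)
    rcases hcase with ⟨h1, _⟩ | ⟨s', j', mm', hpc', _, _⟩ | ⟨s', mm', hpc', _⟩
    · apply h1; rw [h]; simp [Function.update_self]
    · rw [h] at hpc'; simp [Function.update_self] at hpc'
    · rw [h] at hpc'; simp [Function.update_self] at hpc'
  have hwait : ∃ m2 s', m ≤ m2 ∧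
      (∃ j, (e.state m2).pc q = .wait1 s' j ∨ (e.state m2).pc q = .wait2 s' j) := by
    rcases (hperp m le_rfl).2 with ⟨h1, h2⟩ | ⟨s', j', mm', hpc', _, _⟩ |
      ⟨s', mm', hpc', _⟩
    · rcases hpc : (e.state m).pc q with _|s|s|⟨s,j,mm⟩|⟨s,mm⟩|s|⟨s,j⟩|⟨s,j⟩|s|_|_ <;>
        (try (have hi := glb_inv e m q; unfold InvP at hi; rw [hpc] at hi))
      · exact absurd hi.1 h1
      · exact absurd hi.1 h1
      · exact absurd hi.1 h1
      · exact absurd hi.1 h1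
      · exact absurd hi.1 h1
      · obtain ⟨m1, hm1, hpc1⟩ := prog_unsetChoosing e q m s hpc
        exact ⟨m1, s, hm1, 0, Or.inl hpc1⟩
      · exact ⟨m, s, le_rfl, j, Or.inl hpc⟩
      · exact ⟨m, s, le_rfl, j, Or.inr hpc⟩
      · exact absurd hpc (hnc_cs m le_rfl s)
      · exact absurd hpc (hnc_e1 m le_rfl)
      · exact absurd hi.1 h1
    · obtain ⟨m1, hm1, hpc1⟩ := prog_scan e q (N - j') m s' j' mm' le_rfl hpc'
      obtain ⟨m2, hm2, hpc2⟩ := prog_unsetChoosing e q m1 s' hpc1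
      exact ⟨m2, s', le_trans hm1 hm2, 0, Or.inl hpc2⟩
    · obtain ⟨m1, hm1, hpc1⟩ := prog_setToken e q m s' mm' hpc'
      obtain ⟨m2, hm2, hpc2⟩ := prog_unsetChoosing e q m1 s' hpc1
      exact ⟨m2, s', le_trans hm1 hm2, 0, Or.inl hpc2⟩
  obtain ⟨m2, s', hm2, hj0⟩ := hwait
  have hWq : ∀ m', m2 ≤ m' → ∃ jq, (e.state m').pc q = .wait1 s' jq ∨
      (e.state m').pc q = .wait2 s' jq :=
    wait_persist e q s' m2 hj0 (fun m' hm' s'' => hnc_cs m' (le_trans hm2 hm') s'')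
  have htc := wait_token_const e q s' m2 hWq
  set tq := (e.state m2).token q with htq
  have htq0 : tq ≠ 0 := by
    obtain ⟨j, hj | hj⟩ := hj0
    · exact (invp_wait1 e m2 q hj).1
    · exact (invp_wait2 e m2 q hj).1
  have hs'0 : s' ≠ 0 := by
    obtain ⟨j, hj | hj⟩ := hj0
    · exact (invp_wait1 e m2 q hj).2.2.2.1
    · exact (invp_wait2 e m2 q hj).2.2.2.1
  have hglt : GLt tq q t i := by
    obtain ⟨j, hj⟩ := hj0
    rcases (hperp m2 hm2).2 with ⟨h1, h2⟩ | ⟨s'', j'', mm'', hpc'', _, _⟩ |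
      ⟨s'', mm'', hpc'', _⟩
    · exact h2
    · rcases hj with hj | hj <;> rw [hj] at hpc'' <;> simp at hpc''
    · rcases hj with hj | hj <;> rw [hj] at hpc'' <;> simp at hpc''
  exact ⟨m2, s', tq, hm2, hs'0, htq0, hglt, htc, hWq⟩

end Dev8


/-- **Starvation freedom for the GLB algorithm.**  In every execution in which no process
stays in the critical section forever, every process that enters the entry section
eventually enters the critical section. -/
theorem glb_starvation_freedom {N : ℕ} (e : GLBExec N)
    (hncs : ∀ (i : Fin N) (n : ℕ), glbInCS (e.state n) i →
      ∃ m, n ≤ m ∧ ¬ glbInCS (e.state m) i)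
    (i : Fin N) (n : ℕ) (h : glbInEntry (e.state n) i) :
    ∃ m, n ≤ m ∧ glbInCS (e.state m) i := by
  classical
  by_contra hno
  push_neg at hno
  -- reach the waiting room
  have hentry : ∃ n1 s, n ≤ n1 ∧
      ((e.state n1).pc i = .wait1 s 0 ∨
        ∃ j, (e.state n1).pc i = .wait1 s j ∨ (e.state n1).pc i = .wait2 s j) := by
    unfold glbInEntry at h
    rcases hpc : (e.state n).pc i with _|s|s|⟨s,j,mm⟩|⟨s,mm⟩|s|⟨s,j⟩|⟨s,j⟩|s|_|_ <;>
      rw [hpc] at h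
    · exact (h : False).elim
    · obtain ⟨m, hm, hw⟩ := prog_toWait1 e i n s (Or.inl hpc)
      exact ⟨m, s, hm, Or.inl hw⟩
    · obtain ⟨m, hm, hw⟩ := prog_toWait1 e i n s (Or.inr (Or.inl hpc))
      exact ⟨m, s, hm, Or.inl hw⟩
    · obtain ⟨m, hm, hw⟩ := prog_toWait1 e i n s (Or.inr (Or.inr (Or.inl ⟨j, mm, hpc⟩)))
      exact ⟨m, s, hm, Or.inl hw⟩
    · obtain ⟨m, hm, hw⟩ := prog_toWait1 e i n s (Or.inr (Or.inr (Or.inr (Or.inl ⟨mm, hpc⟩))))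
      exact ⟨m, s, hm, Or.inl hw⟩
    · obtain ⟨m, hm, hw⟩ := prog_toWait1 e i n s (Or.inr (Or.inr (Or.inr (Or.inr hpc))))
      exact ⟨m, s, hm, Or.inl hw⟩
    · exact ⟨n, s, le_rfl, Or.inr ⟨j, Or.inl hpc⟩⟩
    · exact ⟨n, s, le_rfl, Or.inr ⟨j, Or.inr hpc⟩⟩
    · exact (h : False).elim
    · exact (h : False).elim
    · exact (h : False).elim
  obtain ⟨n1, s, hn1, hw0⟩ := hentry
  have hw0' : ∃ j, (e.state n1).pc i = .wait1 s j ∨ (e.state n1).pc i = .wait2 s j := by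
    rcases hw0 with hw | hw
    · exact ⟨0, Or.inl hw⟩
    · exact hw
  have hnc : ∀ m, n1 ≤ m → ∀ s', (e.state m).pc i ≠ .cs s' :=
    fun m hm s' hc => hno m (le_trans hn1 hm) ⟨s', hc⟩
  have hW : ∀ m, n1 ≤ m → ∃ j, (e.state m).pc i = .wait1 s j ∨ (e.state m).pc i = .wait2 s j :=
    wait_persist e i s n1 hw0' hnc
  set t := (e.state n1).token i with htdef
  have htok : ∀ m, n1 ≤ m → (e.state m).token i = t := wait_token_const e i s n1 hW
  have ht0 : t ≠ 0 := by
    obtain ⟨j, hj | hj⟩ := hw0'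
    · exact (invp_wait1 e n1 i hj).1
    · exact (invp_wait2 e n1 i hj).1
  have hs0 : s ≠ 0 := by
    obtain ⟨j, hj | hj⟩ := hw0'
    · exact (invp_wait1 e n1 i hj).2.2.2.1
    · exact (invp_wait2 e n1 i hj).2.2.2.1
  have hmono : ∀ m' m'', n1 ≤ m' → m' ≤ m'' → ∀ q, potP t i (e.state m'') q →
      potP t i (e.state m') q := by
    intro m' m'' h1
    induction m'' with
    | zero => intro h2 q hq; have : m' = 0 := Nat.le_zero.mp h2; subst this; exact hq
    | succ m'' ih =>
      intro h2 q hq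
      rcases Nat.lt_or_ge m' (m'' + 1) with hlt | hge
      · have h2' : m' ≤ m'' := Nat.lt_succ_iff.mp hlt
        exact ih h2' q (pot_step (e.step m'') (htok m'' (le_trans h1 h2')) hq)
      · have : m' = m'' + 1 := Nat.le_antisymm h2 hge
        subst this; exact hq
  have L : ∀ c m, n1 ≤ m →
      (Finset.univ.filter (fun q => potP t i (e.state m) q)).card ≤ c → False := by
    intro c
    induction c with
    | zero =>
      intro m hm hcard
      have hempty : ∀ m', m ≤ m' → ∀ q, ¬ potP t i (e.state m') q := by
        intro m' hm' q hq
        have hq' : potP t i (e.state m) q := hmono m m' hm hm' q hq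
        have hmem : q ∈ Finset.univ.filter (fun q => potP t i (e.state m) q) :=
          Finset.mem_filter.mpr ⟨Finset.mem_univ q, hq'⟩
        have := Finset.card_pos.mpr ⟨q, hmem⟩
        omega
      have HK : ∀ m', m ≤ m' → ∀ r : Fin N, r ≠ i →
          (e.state m').token r = 0 ∨ ¬ GLt ((e.state m').token r) r t i := by
        intro m' hm' r hr
        by_cases h0 : (e.state m').token r = 0
        · exact Or.inl h0
        · exact Or.inr (fun hgl => hempty m' hm' r ⟨hr, Or.inl ⟨h0, hgl⟩⟩)
      have hub := eventually_unblocked e i s t m (fun m' hm' => hW m' (le_trans hm hm'))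
        (fun m' hm' => htok m' (le_trans hm hm')) ht0 hs0 HK
      choose f hf1 hf2 using hub
      set M := m ⊔ Finset.univ.sup f with hMdef
      have hmM : m ≤ M := le_max_left _ _
      have Hnb : ∀ (r : Fin N) m', M ≤ m' → ¬ blocksW1 e m' r s := by
        intro r m' hm'
        exact hf2 r m'
          (le_trans (le_trans (Finset.le_sup (Finset.mem_univ r)) (le_max_right _ _)) hm')
      have HK' : ∀ m', M ≤ m' → ∀ r : Fin N, r ≠ i →
          (e.state m').token r = 0 ∨ ¬ GLt ((e.state m').token r) r t i :=
        fun m' hm' => HK m' (le_trans hmM hm')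
      have hn1M : n1 ≤ M := le_trans hm hmM
      obtain ⟨j, hj | hj⟩ := hW M hn1M
      · obtain ⟨m', hm', hcs⟩ := adv e i s t M hs0 HK' Hnb (2 * N + 1) M j le_rfl
          (htok M hn1M) (Or.inl ⟨hj, (invp_wait1 e M i hj).2.2.2.2, by
            have := (invp_wait1 e M i hj).2.2.2.2; omega⟩)
        exact hnc m' (le_trans hn1M hm') s hcs
      · obtain ⟨m', hm', hcs⟩ := adv e i s t M hs0 HK' Hnb (2 * N + 1) M j le_rfl
          (htok M hn1M) (Or.inr ⟨hj, (invp_wait2 e M i hj).2.2.2.2, by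
            have := (invp_wait2 e M i hj).2.2.2.2; omega⟩)
        exact hnc m' (le_trans hn1M hm') s hcs
    | succ c ih =>
      intro m hm hcard
      by_cases hex : ∃ q ∈ Finset.univ.filter (fun q => potP t i (e.state m) q),
          ∃ m', m ≤ m' ∧ ¬ potP t i (e.state m') q
      · obtain ⟨q0, hq0, m', hm', hnp⟩ := hex
        apply ih m' (le_trans hm hm')
        have hsub : Finset.univ.filter (fun q => potP t i (e.state m') q) ⊆
            (Finset.univ.filter (fun q => potP t i (e.state m) q)).erase q0 := by
          intro x hx
          have hpx := (Finset.mem_filter.mp hx).2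
          refine Finset.mem_erase.mpr ⟨?_,
            Finset.mem_filter.mpr ⟨Finset.mem_univ x, hmono m m' hm hm' x hpx⟩⟩
          intro hc; subst hc; exact hnp hpx
        have h1 := Finset.card_le_card hsub
        have h2 := Finset.card_erase_of_mem hq0
        omega
      · push_neg at hex
        by_cases hne : (Finset.univ.filter (fun q => potP t i (e.state m) q)).Nonempty
        swap
        · apply ih m hm
          rw [Finset.not_nonempty_iff_eq_empty.mp hne]
          simp
        have hmatall : ∀ q : Fin N, ∃ mq sq tq,
            q ∈ Finset.univ.filter (fun q => potP t i (e.state m) q) →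
              (m ≤ mq ∧ sq ≠ 0 ∧ tq ≠ 0 ∧ GLt tq q t i ∧
               (∀ m', mq ≤ m' → (e.state m').token q = tq) ∧
               (∀ m', mq ≤ m' → ∃ jq, (e.state m').pc q = .wait1 sq jq ∨
                 (e.state m').pc q = .wait2 sq jq)) := by
          intro q
          by_cases hqm : q ∈ Finset.univ.filter (fun q => potP t i (e.state m) q)
          · obtain ⟨mq, sq, tq, hmat⟩ := mat e hncs t i m q (fun m' hm' => hex q hqm m' hm')
            exact ⟨mq, sq, tq, fun _ => hmat⟩
          · exact ⟨m, 1, 1, fun hc => absurd hc hqm⟩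
        choose mq sq tq hspec using hmatall
        obtain ⟨q0, hq0S, hmin⟩ := Finset.exists_min_image
          (Finset.univ.filter (fun q => potP t i (e.state m) q))
          (fun q => tq q * N + q.val) hne
        obtain ⟨hmq0, hsq0, htq0, hglt0, htc0, hWq0⟩ := hspec q0 hq0S
        set M2 := m ⊔ Finset.univ.sup mq with hM2def
        have hmM2 : m ≤ M2 := le_max_left _ _
        have hq0M2 : mq q0 ≤ M2 :=
          le_trans (Finset.le_sup (Finset.mem_univ q0)) (le_max_right _ _)
        have KEY : ∀ m', M2 ≤ m' → ∀ r : Fin N, r ≠ q0 →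
            (e.state m').token r = 0 ∨ ¬ GLt ((e.state m').token r) r (tq q0) q0 := by
          intro m' hm' r hr
          by_cases hri : r = i
          · subst hri
            refine Or.inr (fun hgl => ?_)
            rw [htok m' (le_trans (le_trans hm hmM2) hm')] at hgl
            exact GLt_asymm hglt0 hgl
          · by_cases hpot : potP t i (e.state m') r
            · have hrm : r ∈ Finset.univ.filter (fun q => potP t i (e.state m) q) :=
                Finset.mem_filter.mpr ⟨Finset.mem_univ r,
                  hmono m m' hm (le_trans hmM2 hm') r hpot⟩
              obtain ⟨_, _, _, _, htcr, _⟩ := hspec r hrm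
              refine Or.inr (fun hgl => ?_)
              rw [htcr m' (le_trans (le_trans (Finset.le_sup (Finset.mem_univ r))
                (le_max_right _ _)) hm')] at hgl
              have henc := GLt_enc hgl
              have hge : tq q0 * N + q0.val ≤ tq r * N + r.val := hmin r hrm
              omega
            · by_cases h0 : (e.state m').token r = 0
              · exact Or.inl h0
              · exact Or.inr (fun hgl => hpot ⟨hri, Or.inl ⟨h0, GLt_trans hgl hglt0⟩⟩)
        have hub := eventually_unblocked e q0 (sq q0) (tq q0) M2
          (fun m' hm' => hWq0 m' (le_trans hq0M2 hm'))
          (fun m' hm' => htc0 m' (le_trans hq0M2 hm')) htq0 hsq0 KEY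
        choose f hf1 hf2 using hub
        set M3 := M2 ⊔ Finset.univ.sup f with hM3def
        have hM2M3 : M2 ≤ M3 := le_max_left _ _
        have Hnb : ∀ (r : Fin N) m', M3 ≤ m' → ¬ blocksW1 e m' r (sq q0) := by
          intro r m' hm'
          exact hf2 r m'
            (le_trans (le_trans (Finset.le_sup (Finset.mem_univ r)) (le_max_right _ _)) hm')
        have KEY' : ∀ m', M3 ≤ m' → ∀ r : Fin N, r ≠ q0 →
            (e.state m').token r = 0 ∨ ¬ GLt ((e.state m').token r) r (tq q0) q0 :=
          fun m' hm' => KEY m' (le_trans hM2M3 hm')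
        have hq0M3 : mq q0 ≤ M3 := le_trans hq0M2 hM2M3
        have hcs : ∃ mc, M3 ≤ mc ∧ (e.state mc).pc q0 = .cs (sq q0) := by
          obtain ⟨j, hj | hj⟩ := hWq0 M3 hq0M3
          · exact adv e q0 (sq q0) (tq q0) M3 hsq0 KEY' Hnb (2 * N + 1) M3 j le_rfl
              (htc0 M3 hq0M3) (Or.inl ⟨hj, (invp_wait1 e M3 q0 hj).2.2.2.2, by
                have := (invp_wait1 e M3 q0 hj).2.2.2.2; omega⟩)
          · exact adv e q0 (sq q0) (tq q0) M3 hsq0 KEY' Hnb (2 * N + 1) M3 j le_rfl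
              (htc0 M3 hq0M3) (Or.inr ⟨hj, (invp_wait2 e M3 q0 hj).2.2.2.2, by
                have := (invp_wait2 e M3 q0 hj).2.2.2.2; omega⟩)
        obtain ⟨mc, hmc, hcs⟩ := hcs
        obtain ⟨mz, hmz, hpcz, htkz⟩ := cs_exit e hncs q0 mc (sq q0) hcs
        have hp := hex q0 hq0S mz (le_trans (le_trans hmM2 hM2M3) (le_trans hmc hmz))
        rcases hp.2 with ⟨h1, _⟩ | ⟨s', j', mm', hpc', _, _⟩ | ⟨s', mm', hpc', _⟩
        · exact h1 htkz
        · rw [hpcz] at hpc'; simp at hpc'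
        · rw [hpcz] at hpc'; simp at hpc'
  exact L (Finset.univ.filter (fun q => potP t i (e.state n1) q)).card n1 le_rfl le_rfl
end
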